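/- arXiv:math/0011078 — 11 statements merged into one kernel-verified Lean document; each statement's English description precedes it below -/
import Mathlib

section
/- Let f : ℝ → ℝ be a function and let a, b be real numbers with a < b. For every positive integer N, the partial sum of the exhaustion series up to level N collapses to a dyadic Riemann sum: ∑_{n=1}^{N} ∑_{m=1}^{2^n - 1} (-1)^{m+1} 2^{-n} f(a + m(b-a)/2^n) = 2^{-N} ∑_{m=1}^{2^N - 1} f(a + m(b-a)/2^N). -/
lemma aux_even (g : ℕ → ℝ) (M : ℕ) :
    ∑ m ∈ Finset.Icc 1 (2 * M - 1), (1 - (-1 : ℝ) ^ (m + 1)) * g m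
      = 2 * ∑ k ∈ Finset.Icc 1 (M - 1), g (2 * k) := by
  induction M with
  | zero => simp
  | succ M ih =>
    rcases Nat.eq_zero_or_pos M with h | h
    · subst h
      norm_num
    · have h1 : 2 * (M + 1) - 1 = (2 * M - 1) + 1 + 1 := by omega
      have h2 : (2 * M - 1) + 1 = 2 * M := by omega
      have h4 : M + 1 - 1 = (M - 1) + 1 := by omega
      rw [h1, Finset.sum_Icc_succ_top (by omega), Finset.sum_Icc_succ_top (by omega), ih,
        h4, Finset.sum_Icc_succ_top (by omega), h2]
      have e1 : (-1 : ℝ) ^ (2 * M + 1) = -1 := by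
        rw [pow_succ, pow_mul]; norm_num
      have e2 : (-1 : ℝ) ^ (2 * M + 1 + 1) = 1 := by
        rw [pow_succ, pow_succ, pow_mul]; norm_num
      have h5 : 2 * ((M - 1) + 1) = 2 * M := by omega
      rw [e2, h5]
      have : 2 * M + 1 = (2 * M) + 1 := rfl
      rw [this, e1]
      ring

theorem stmt_0 (f : ℝ → ℝ) (a b : ℝ) (hab : a < b) (N : ℕ) (hN : 0 < N) :
    ∑ n ∈ Finset.Icc (1:ℕ) N, ∑ m ∈ Finset.Icc (1:ℕ) (2 ^ n - 1),
        (-1 : ℝ) ^ (m + 1) / 2 ^ n * f (a + (m:ℝ) * (b - a) / 2 ^ n)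
      = 1 / 2 ^ N * ∑ m ∈ Finset.Icc (1:ℕ) (2 ^ N - 1), f (a + (m:ℝ) * (b - a) / 2 ^ N) := by
  induction N with
  | zero => omega
  | succ N ih =>
    rcases Nat.eq_zero_or_pos N with h | h
    · subst h
      norm_num
    · rw [Finset.sum_Icc_succ_top (by omega), ih h]
      set g : ℕ → ℝ := fun m => f (a + (m : ℝ) * (b - a) / 2 ^ (N + 1)) with hg
      have key := aux_even g (2 ^ N)
      have hM : 2 * 2 ^ N - 1 = 2 ^ (N + 1) - 1 := by
        rw [pow_succ]; omega
      rw [hM] at key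
      have hpt : ∀ m : ℕ, f (a + (m : ℝ) * (b - a) / 2 ^ N) = g (2 * m) := by
        intro m
        simp only [hg]
        congr 2
        push_cast
        rw [pow_succ]
        ring
      have hls : ∑ m ∈ Finset.Icc (1:ℕ) (2 ^ N - 1), f (a + (m:ℝ) * (b - a) / 2 ^ N)
          = ∑ m ∈ Finset.Icc (1:ℕ) (2 ^ N - 1), g (2 * m) := by
        exact Finset.sum_congr rfl fun m _ => hpt m
      rw [hls]
      have expand : ∑ m ∈ Finset.Icc (1:ℕ) (2 ^ (N + 1) - 1), (1 - (-1 : ℝ) ^ (m + 1)) * g m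
          = (∑ m ∈ Finset.Icc (1:ℕ) (2 ^ (N + 1) - 1), g m)
            - ∑ m ∈ Finset.Icc (1:ℕ) (2 ^ (N + 1) - 1), (-1 : ℝ) ^ (m + 1) * g m := by
        rw [← Finset.sum_sub_distrib]
        exact Finset.sum_congr rfl fun m _ => by ring
      rw [expand] at key
      have hsigned : ∑ m ∈ Finset.Icc (1:ℕ) (2 ^ (N+1) - 1),
          (-1 : ℝ) ^ (m + 1) / 2 ^ (N+1) * f (a + (m:ℝ) * (b - a) / 2 ^ (N+1))
          = (1 / 2 ^ (N+1)) * ∑ m ∈ Finset.Icc (1:ℕ) (2 ^ (N+1) - 1), (-1 : ℝ) ^ (m + 1) * g m := by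
        rw [Finset.mul_sum]
        exact Finset.sum_congr rfl fun m _ => by simp only [hg]; ring
      rw [hsigned]
      have h2N : (2 : ℝ) ^ (N + 1) = 2 * 2 ^ N := by ring
      have hne : (2 : ℝ) ^ N ≠ 0 := by positivity
      have hne1 : (2 : ℝ) ^ (N + 1) ≠ 0 := by positivity
      field_simp
      linear_combination (-(2:ℝ) ^ N) * key
end

section
/- Let a, b be real numbers with a < b and let f : ℝ → ℝ be continuous on the interval [a, b]. Then the integral of f over [a, b] equals (b - a) times the sum of the exhaustion series: ∫_a^b f(x) dx = (b - a) ∑_{n=1}^{∞} ∑_{m=1}^{2^n - 1} (-1)^{m+1} 2^{-n} f(a + m(b-a)/2^n), where the outer series over n converges. -/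
open Finset Filter intervalIntegral

lemma exh_parity (g : ℕ → ℝ) (M : ℕ) (hM : 1 ≤ M) :
    ∑ m ∈ Icc 1 (2*M-1), g m
      = 2 * ∑ k ∈ Icc 1 (M-1), g (2*k) + ∑ m ∈ Icc 1 (2*M-1), (-1:ℝ)^(m+1) * g m := by
  induction M, hM using Nat.le_induction with
  | base => norm_num
  | succ M hM ih =>
    have h1 : 2*(M+1)-1 = (2*M-1) + 1 + 1 := by omega
    have h2 : (M+1)-1 = (M-1) + 1 := by omega
    have h3 : (2*M-1)+1 = 2*M := by omega
    have h4 : (2*M-1)+1+1 = 2*M+1 := by omega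
    rw [h1, h2, Finset.sum_Icc_succ_top (by omega), Finset.sum_Icc_succ_top (by omega),
      Finset.sum_Icc_succ_top (by omega), Finset.sum_Icc_succ_top (by omega),
      Finset.sum_Icc_succ_top (by omega), ih, h3]
    have hm1 : (M-1)+1 = M := by omega
    rw [hm1]
    have e1 : (-1:ℝ)^(2*M+1+1) = 1 := (Even.neg_one_pow ⟨M+1, by omega⟩)
    have e2 : (-1:ℝ)^(2*M+1) = -1 := (Odd.neg_one_pow ⟨M, by omega⟩)
    rw [e1, e2]
    ring

lemma exh_telescope (f : ℝ → ℝ) (a b : ℝ) (N : ℕ) (hN : 1 ≤ N) :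
    ∑ n ∈ Icc 1 N, ∑ m ∈ Icc (1:ℕ) (2^n - 1),
        (-1:ℝ)^(m+1) / 2^n * f (a + (m:ℝ)*(b-a)/2^n)
      = ∑ m ∈ Icc (1:ℕ) (2^N - 1), f (a + (m:ℝ)*(b-a)/2^N) / 2^N := by
  induction N, hN using Nat.le_induction with
  | base => norm_num; ring
  | succ N hN ih =>
    rw [Finset.sum_Icc_succ_top (by omega : 1 ≤ N + 1), ih]
    set g : ℕ → ℝ := fun m => f (a + (m:ℝ)*(b-a)/2^(N+1)) / 2^(N+1) with hg
    have key := exh_parity g (2^N) (Nat.one_le_two_pow)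
    have h2M : 2 * 2^N - 1 = 2^(N+1) - 1 := by
      have : 2^(N+1) = 2 * 2^N := by ring
      omega
    rw [h2M] at key
    have hA : ∑ m ∈ Icc (1:ℕ) (2^N - 1), f (a + (m:ℝ)*(b-a)/2^N) / 2^N
        = 2 * ∑ k ∈ Icc 1 (2^N - 1), g (2*k) := by
      rw [Finset.mul_sum]
      refine Finset.sum_congr rfl fun k _ => ?_
      have harg : a + ((2*k : ℕ):ℝ)*(b-a)/2^(N+1) = a + (k:ℝ)*(b-a)/2^N := by
        push_cast; ring
      rw [hg]; simp only
      rw [harg]; ring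
    have hB : ∑ m ∈ Icc (1:ℕ) (2^(N+1) - 1),
        (-1:ℝ)^(m+1) / 2^(N+1) * f (a + (m:ℝ)*(b-a)/2^(N+1))
        = ∑ m ∈ Icc 1 (2^(N+1) - 1), (-1:ℝ)^(m+1) * g m := by
      refine Finset.sum_congr rfl fun m _ => ?_
      rw [hg]; simp only; ring
    rw [hA, hB, ← key]



lemma riemann_dyadic (a b : ℝ) (hab : a < b) (f : ℝ → ℝ)
    (hf : ContinuousOn f (Set.Icc a b)) :
    Tendsto (fun N : ℕ => ∑ m ∈ Finset.range (2^N),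
        (b-a)/2^N * f (a + (m:ℝ)*(b-a)/2^N)) atTop (nhds (∫ x in a..b, f x)) := by
  have hba : (0:ℝ) < b - a := by linarith
  rw [Metric.tendsto_atTop]
  intro ε hε
  set ε' : ℝ := ε / (2*(b-a)) with hε'def
  have hε' : 0 < ε' := by positivity
  have huc : UniformContinuousOn f (Set.Icc a b) :=
    isCompact_Icc.uniformContinuousOn_of_continuous hf
  rw [Metric.uniformContinuousOn_iff] at huc
  obtain ⟨δ, hδ, hδ'⟩ := huc ε' hε'
  -- choose N₀ with (b-a)/2^N < δ for N ≥ N₀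
  have htend : Tendsto (fun N : ℕ => (b-a) * (1/2:ℝ)^N) atTop (nhds 0) := by
    have := tendsto_pow_atTop_nhds_zero_of_lt_one (by norm_num : (0:ℝ) ≤ 1/2)
      (by norm_num : (1/2:ℝ) < 1)
    simpa using this.const_mul (b-a)
  have hev : ∀ᶠ N : ℕ in atTop, (b-a) * (1/2:ℝ)^N < δ :=
    htend.eventually (gt_mem_nhds hδ)
  obtain ⟨N₀, hN₀⟩ := eventually_atTop.mp hev
  refine ⟨N₀, fun N hN => ?_⟩
  -- setup
  set n : ℕ := 2^N with hn
  set h : ℝ := (b-a)/2^N with hh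
  have hhpos : 0 < h := by positivity
  have hhδ : h < δ := by
    have := hN₀ N hN
    rw [hh]; calc (b-a)/2^N = (b-a)*(1/2:ℝ)^N := by rw [one_div_pow, ← div_eq_mul_one_div]
    _ < δ := this
  set x : ℕ → ℝ := fun m => a + m * h with hx
  have hxstep : ∀ m : ℕ, x (m+1) - x m = h := by
    intro m; simp only [hx]; push_cast; ring
  have hxmono : ∀ m : ℕ, x m ≤ x (m+1) := fun m => by nlinarith [hxstep m]
  have hx0 : x 0 = a := by simp [hx]
  have hxn : x n = b := by
    simp only [hx, hn, hh]
    have : ((2^N : ℕ):ℝ) = (2:ℝ)^N := by push_cast; ring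
    rw [this]; field_simp; ring
  have hxmem : ∀ m ≤ n, x m ∈ Set.Icc a b := by
    intro m hm
    constructor
    · simp only [hx]; nlinarith [hhpos, (by positivity : (0:ℝ) ≤ (m:ℝ))]
    · have : x m ≤ x n := by
        have hmono : Monotone x := monotone_nat_of_le_succ hxmono
        exact hmono hm
      rw [hxn] at this; exact this
  have hsub : ∀ m < n, Set.Icc (x m) (x (m+1)) ⊆ Set.Icc a b := by
    intro m hm
    apply Set.Icc_subset_Icc
    · exact (hxmem m (le_of_lt hm)).1
    · exact (hxmem (m+1) hm).2
  have hint : ∀ m < n, IntervalIntegrable f MeasureTheory.volume (x m) (x (m+1)) := by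
    intro m hm
    apply ContinuousOn.intervalIntegrable
    rw [Set.uIcc_of_le (hxmono m)]
    exact hf.mono (hsub m hm)
  have hI : ∫ t in a..b, f t = ∑ m ∈ Finset.range n, ∫ t in (x m)..(x (m+1)), f t := by
    rw [intervalIntegral.sum_integral_adjacent_intervals hint, hx0, hxn]
  -- termwise bound
  have hterm : ∀ m ∈ Finset.range n,
      |h * f (x m) - ∫ t in (x m)..(x (m+1)), f t| ≤ ε' * h := by
    intro m hm
    rw [Finset.mem_range] at hm
    have hconst : h * f (x m) = ∫ t in (x m)..(x (m+1)), f (x m) := by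
      rw [intervalIntegral.integral_const, hxstep m, smul_eq_mul]
    rw [hconst, ← intervalIntegral.integral_sub (by
        apply ContinuousOn.intervalIntegrable
        exact continuousOn_const) (hint m hm)]
    have := intervalIntegral.norm_integral_le_of_norm_le_const
      (C := ε') (f := fun t => f (x m) - f t) (a := x m) (b := x (m+1)) ?_
    · calc |∫ t in (x m)..(x (m+1)), (f (x m) - f t)| ≤ ε' * |x (m+1) - x m| := this
        _ = ε' * h := by rw [hxstep m, abs_of_pos hhpos]
    · intro t ht
      rw [Set.uIoc_of_le (hxmono m)] at ht
      have htmem : t ∈ Set.Icc (x m) (x (m+1)) := Set.Ioc_subset_Icc_self ht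
      have ht1 : t ∈ Set.Icc a b := hsub m hm htmem
      have hxm : x m ∈ Set.Icc a b := hxmem m (le_of_lt hm)
      have hd : dist (x m) t < δ := by
        rw [Real.dist_eq, abs_of_nonpos (by linarith [htmem.1])]
        have := htmem.2
        have := hxstep m
        linarith
      have := hδ' (x m) hxm t ht1 hd
      rw [Real.dist_eq] at this
      exact le_of_lt this
  -- assemble
  have hdiff : |(∑ m ∈ Finset.range n, h * f (x m)) - ∫ t in a..b, f t| ≤ ε' * (b - a) := by
    rw [hI, ← Finset.sum_sub_distrib]
    calc |∑ m ∈ Finset.range n, (h * f (x m) - ∫ t in (x m)..(x (m+1)), f t)|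
        ≤ ∑ m ∈ Finset.range n, |h * f (x m) - ∫ t in (x m)..(x (m+1)), f t| :=
          Finset.abs_sum_le_sum_abs _ _
      _ ≤ ∑ m ∈ Finset.range n, ε' * h := Finset.sum_le_sum hterm
      _ = n * (ε' * h) := by rw [Finset.sum_const, nsmul_eq_mul, Finset.card_range]
      _ = ε' * (n * h) := by ring
      _ = ε' * (b - a) := by
          congr 1
          rw [hh, hn]
          have : ((2^N : ℕ):ℝ) = (2:ℝ)^N := by push_cast; ring
          rw [this]; field_simp
  have hsum_eq : (∑ m ∈ Finset.range (2^N), (b-a)/2^N * f (a + (m:ℝ)*(b-a)/2^N))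
      = ∑ m ∈ Finset.range n, h * f (x m) := by
    refine Finset.sum_congr (by rw [hn]) fun m _ => ?_
    rw [hh, hx]; simp only [hh]; ring_nf
  rw [Real.dist_eq, hsum_eq]
  calc |(∑ m ∈ Finset.range n, h * f (x m)) - ∫ t in a..b, f t| ≤ ε' * (b - a) := hdiff
    _ = ε / 2 := by rw [hε'def]; field_simp
    _ < ε := by linarith

theorem stmt_1 (a b : ℝ) (hab : a < b) (f : ℝ → ℝ)
    (hf : ContinuousOn f (Set.Icc a b)) :
    ∃ S : ℝ,
      Filter.Tendsto
        (fun N : ℕ => ∑ n ∈ Finset.Icc (1:ℕ) N, ∑ m ∈ Finset.Icc (1:ℕ) (2 ^ n - 1),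
          (-1 : ℝ) ^ (m + 1) / 2 ^ n * f (a + (m:ℝ) * (b - a) / 2 ^ n))
        Filter.atTop (nhds S) ∧
      ∫ x in a..b, f x = (b - a) * S := by
  have hba : (0:ℝ) < b - a := by linarith
  refine ⟨(∫ x in a..b, f x) / (b - a), ?_, by field_simp⟩
  set S := (∫ x in a..b, f x) / (b - a) with hS
  -- Q N : the dyadic Riemann-type sum
  have hQtend : Tendsto (fun N : ℕ => ∑ m ∈ Finset.Icc (1:ℕ) (2^N - 1),
      f (a + (m:ℝ)*(b-a)/2^N) / 2^N) atTop (nhds S) := by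
    have hR := riemann_dyadic a b hab f hf
    have h1 : Tendsto (fun N : ℕ => (∑ m ∈ Finset.range (2^N),
        (b-a)/2^N * f (a + (m:ℝ)*(b-a)/2^N)) / (b-a)) atTop
        (nhds ((∫ x in a..b, f x)/(b-a))) := hR.div_const _
    have h2 : Tendsto (fun N : ℕ => f a * (1/2:ℝ)^N) atTop (nhds 0) := by
      have := tendsto_pow_atTop_nhds_zero_of_lt_one (by norm_num : (0:ℝ) ≤ 1/2)
        (by norm_num : (1/2:ℝ) < 1)
      simpa using this.const_mul (f a)
    have h3 := h1.sub h2
    rw [sub_zero] at h3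
    refine h3.congr fun N => ?_
    -- range peel
    have hpow : (1:ℕ) ≤ 2^N := Nat.one_le_two_pow
    have hsplit : ∑ m ∈ Finset.range (2^N), (b-a)/2^N * f (a + (m:ℝ)*(b-a)/2^N)
        = (b-a)/2^N * f a + ∑ m ∈ Finset.Icc (1:ℕ) (2^N - 1),
          (b-a)/2^N * f (a + (m:ℝ)*(b-a)/2^N) := by
      have hn : 2^N = (2^N - 1) + 1 := by omega
      rw [hn, Finset.sum_range_succ']
      simp only [Nat.add_sub_cancel, Nat.cast_zero, zero_mul, zero_div, add_zero]
      rw [add_comm]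
      congr 1
      rw [← Finset.Ico_add_one_right_eq_Icc, Finset.sum_Ico_eq_sum_range]
      refine Finset.sum_congr rfl fun i _ => ?_
      rw [add_comm 1 i]
    rw [hsplit]
    rw [add_div, Finset.sum_div]
    have hfa : (b-a)/2^N * f a / (b-a) = f a * (1/2:ℝ)^N := by
      rw [div_pow, one_pow]
      field_simp
    rw [hfa, add_sub_cancel_left]
    refine Finset.sum_congr rfl fun m _ => ?_
    field_simp
  -- the partial sums eventually equal Q
  refine hQtend.congr' ?_
  filter_upwards [eventually_ge_atTop 1] with N hN
  exact (exh_telescope f a b N hN).symm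
end

section
/- For every nonzero real number a, sin(a)/a = cos²(a/2) + ∑_{n=1}^{∞} sin²(a/2^{n+1}) ∏_{m=1}^{n} cos(a/2^m), where the series on the right converges. -/
open Filter Real Topology

private lemma prod_sin_aux (a : ℝ) : ∀ N : ℕ,
    (2:ℝ)^N * Real.sin (a / 2^N) * ∏ m ∈ Finset.Icc 1 N, Real.cos (a / 2^m) = Real.sin a := by
  intro N
  induction N with
  | zero => simp
  | succ N ih =>
    rw [Finset.prod_Icc_succ_top (by omega), ← ih]
    have h : Real.sin (a / 2^N) = 2 * Real.sin (a / 2^(N+1)) * Real.cos (a / 2^(N+1)) := by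
      rw [show a / 2^N = 2 * (a / 2^(N+1)) by ring, Real.sin_two_mul]
    rw [h]; ring

private lemma sum_eq_aux (a : ℝ) : ∀ N : ℕ,
    Real.cos (a/2)^2 + ∑ n ∈ Finset.Icc (1:ℕ) N,
        Real.sin (a / 2^(n+1))^2 * ∏ m ∈ Finset.Icc (1:ℕ) n, Real.cos (a / 2^m)
    = (∏ m ∈ Finset.Icc (1:ℕ) N, Real.cos (a / 2^m)) * Real.cos (a / 2^(N+1))^2 := by
  intro N
  induction N with
  | zero => norm_num
  | succ N ih =>
    rw [Finset.sum_Icc_succ_top (by omega), Finset.prod_Icc_succ_top (by omega), ← add_assoc, ih]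
    have hc : Real.cos (a/2^(N+1)) = 2 * Real.cos (a/2^(N+2))^2 - 1 := by
      rw [show a/2^(N+1) = 2*(a/2^(N+2)) by ring, Real.cos_two_mul]
    have hs : Real.sin (a/2^(N+2))^2 = 1 - Real.cos (a/2^(N+2))^2 := by
      rw [Real.sin_sq]
    rw [show ((N:ℕ)+1+1) = N+2 from rfl, hc, hs]; ring

theorem stmt_2 (a : ℝ) (ha : a ≠ 0) :
    ∃ S : ℝ,
      Filter.Tendsto
        (fun N : ℕ => ∑ n ∈ Finset.Icc (1:ℕ) N,
          Real.sin (a / 2 ^ (n + 1)) ^ 2 * ∏ m ∈ Finset.Icc (1:ℕ) n, Real.cos (a / 2 ^ m))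
        Filter.atTop (nhds S) ∧
      Real.sin a / a = Real.cos (a / 2) ^ 2 + S := by
  refine ⟨Real.sin a / a - Real.cos (a/2)^2, ?_, by ring⟩
  -- general geometric limit
  have hto0 : ∀ b : ℝ, Tendsto (fun N : ℕ => b / 2^N) atTop (𝓝 0) := by
    intro b
    have hgeo : Tendsto (fun N : ℕ => ((1:ℝ)/2)^N) atTop (𝓝 0) :=
      tendsto_pow_atTop_nhds_zero_of_lt_one (by norm_num) (by norm_num)
    have := hgeo.const_mul b
    simpa [div_eq_mul_inv, ← inv_pow, one_div] using this
  have h0 := hto0 a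
  have h0' : Tendsto (fun N : ℕ => a / 2^N) atTop (𝓝[≠] (0:ℝ)) :=
    tendsto_nhdsWithin_of_tendsto_nhds_of_eventually_within _ h0
      (Filter.Eventually.of_forall fun N => by
        simp only [Set.mem_compl_iff, Set.mem_singleton_iff]
        exact div_ne_zero ha (by positivity))
  have hslope : Tendsto (fun x : ℝ => Real.sin x / x) (𝓝[≠] (0:ℝ)) (𝓝 1) := by
    have h := Real.hasDerivAt_sin 0
    rw [hasDerivAt_iff_tendsto_slope] at h
    simp only [slope_fun_def, Real.sin_zero, Real.cos_zero, sub_zero, vsub_eq_sub,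
      smul_eq_mul] at h
    exact h.congr fun x => (div_eq_inv_mul _ _).symm
  have hP : Tendsto (fun N : ℕ => Real.sin (a/2^N) / (a/2^N)) atTop (𝓝 1) := hslope.comp h0'
  have hPinv : Tendsto (fun N : ℕ => (Real.sin (a/2^N) / (a/2^N))⁻¹) atTop (𝓝 1) := by
    simpa using hP.inv₀ one_ne_zero
  have h1 : Tendsto (fun N : ℕ => a / 2^(N+1)) atTop (𝓝 0) := by
    have := hto0 (a/2)
    have heq : (fun N : ℕ => a/2 / 2^N) = fun N : ℕ => a / 2^(N+1) := by
      funext N; rw [pow_succ]; ring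
    rwa [heq] at this
  have hcos : Tendsto (fun N : ℕ => Real.cos (a/2^(N+1))^2) atTop (𝓝 1) := by
    have := ((Real.continuous_cos.tendsto 0).comp h1).pow 2
    simpa using this
  -- eventually sin (a/2^N) ≠ 0
  have hev : ∀ᶠ N : ℕ in atTop, Real.sin (a/2^N) ≠ 0 := by
    have hball : ∀ᶠ N : ℕ in atTop, |a/2^N| < Real.pi := by
      obtain ⟨N₀, hN₀⟩ := Metric.tendsto_atTop.mp h0 Real.pi Real.pi_pos
      exact Filter.eventually_atTop.2 ⟨N₀, fun n hn => by
        rw [abs_div, abs_of_pos (by positivity : (0:ℝ) < 2^n)]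
        simpa [Real.dist_eq, abs_div, abs_of_pos (by positivity : (0:ℝ) < (2:ℝ)^n)]
          using hN₀ n hn⟩
    filter_upwards [hball] with N hN
    have hxne : a/2^N ≠ 0 := div_ne_zero ha (by positivity)
    have habs := abs_lt.1 hN
    rw [ne_eq, Real.sin_eq_zero_iff_of_lt_of_lt habs.1 habs.2]
    exact hxne
  -- eventual equality with nice formula
  have hEq : ∀ᶠ N : ℕ in atTop,
      Real.sin a / a * (Real.sin (a/2^N) / (a/2^N))⁻¹ * Real.cos (a/2^(N+1))^2
      = (∏ m ∈ Finset.Icc (1:ℕ) N, Real.cos (a / 2^m)) * Real.cos (a/2^(N+1))^2 := by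
    filter_upwards [hev] with N hs
    have hp := prod_sin_aux a N
    have h2 : (2:ℝ)^N ≠ 0 := by positivity
    have hx : a/2^N ≠ 0 := div_ne_zero ha h2
    congr 1
    rw [inv_div]
    have hPval : (∏ m ∈ Finset.Icc (1:ℕ) N, Real.cos (a/2^m))
        = Real.sin a / (2^N * Real.sin (a/2^N)) := by
      rw [eq_div_iff (mul_ne_zero h2 hs)]
      linarith [hp]
    rw [hPval]
    field_simp
  have hA : Tendsto (fun N : ℕ =>
      (∏ m ∈ Finset.Icc (1:ℕ) N, Real.cos (a / 2^m)) * Real.cos (a/2^(N+1))^2)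
      atTop (𝓝 (Real.sin a / a)) := by
    have hBt : Tendsto (fun N : ℕ => Real.sin a / a *
        (Real.sin (a/2^N)/(a/2^N))⁻¹ * Real.cos (a/2^(N+1))^2) atTop
        (𝓝 (Real.sin a / a * 1 * 1)) :=
      (tendsto_const_nhds.mul hPinv).mul hcos
    rw [mul_one, mul_one] at hBt
    exact hBt.congr' hEq
  have key : (fun N : ℕ => ∑ n ∈ Finset.Icc (1:ℕ) N,
        Real.sin (a / 2 ^ (n + 1)) ^ 2 * ∏ m ∈ Finset.Icc (1:ℕ) n, Real.cos (a / 2 ^ m))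
      = fun N : ℕ => (∏ m ∈ Finset.Icc (1:ℕ) N, Real.cos (a / 2^m)) * Real.cos (a/2^(N+1))^2
        - Real.cos (a/2)^2 := by
    funext N
    rw [← sum_eq_aux a N]; ring
  rw [key]
  exact hA.sub_const _
end

section
/- For every nonzero real number a, sin(a)/a = ∑_{n=1}^{∞} ∑_{m=1}^{2^n - 1} (-1)^{m+1} 2^{-n} cos(m·a/2^n), where for each n the inner sum is finite and the outer series over n converges. -/
open Finset Filter Real

noncomputable def Pp (a : ℝ) (N : ℕ) : ℝ :=
  ∑ n ∈ Finset.Icc (1:ℕ) N, ∑ m ∈ Finset.Icc (1:ℕ) (2 ^ n - 1),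
    (-1 : ℝ) ^ (m + 1) / 2 ^ n * Real.cos ((m:ℝ) * a / 2 ^ n)

lemma alt_cos_sum (x : ℝ) (K : ℕ) :
    2 * Real.cos (x/2) * ∑ m ∈ Finset.Icc (1:ℕ) K, (-1:ℝ)^(m+1) * Real.cos (m*x)
      = Real.cos (x/2) - (-1:ℝ)^K * Real.cos (((K:ℝ) + 1/2)*x) := by
  induction K with
  | zero =>
    simp only [Nat.cast_zero, pow_zero]
    rw [show ((0:ℝ) + 1/2)*x = x/2 by ring]
    simp
  | succ K ih =>
    rw [Finset.sum_Icc_succ_top (Nat.le_add_left 1 K)]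
    push_cast
    have h1 : Real.cos (((K:ℝ)+1+1/2)*x)
        = Real.cos (((K:ℝ)+1)*x) * Real.cos (x/2) - Real.sin (((K:ℝ)+1)*x) * Real.sin (x/2) := by
      rw [show ((K:ℝ)+1+1/2)*x = ((K:ℝ)+1)*x + x/2 by ring, Real.cos_add]
    have h2 : Real.cos (((K:ℝ)+1/2)*x)
        = Real.cos (((K:ℝ)+1)*x) * Real.cos (x/2) + Real.sin (((K:ℝ)+1)*x) * Real.sin (x/2) := by
      rw [show ((K:ℝ)+1/2)*x = ((K:ℝ)+1)*x - x/2 by ring, Real.cos_sub]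
    linear_combination ih - (-1:ℝ)^K * h1 - (-1:ℝ)^K * h2

lemma dense_non_pi_mult : Dense {x : ℝ | ∀ k : ℤ, x ≠ k * Real.pi} := by
  have h : {x : ℝ | ∀ k : ℤ, x ≠ k * Real.pi} = (Set.range fun k : ℤ => (k:ℝ) * Real.pi)ᶜ := by
    ext x
    simp [Set.mem_compl_iff, Set.mem_range, eq_comm]
  rw [h]
  exact (Set.countable_range _).dense_compl ℝ

lemma key_id (N : ℕ) : ∀ a : ℝ,
    Real.sin (a / 2^(N+1)) * (2^(N+1) * Pp a N + 1) = Real.sin (a - a / 2^(N+1)) := by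
  induction N with
  | zero =>
    intro a
    have : Pp a 0 = 0 := by simp [Pp]
    rw [this, show a - a/2^(0+1) = a/2^(0+1) by ring]
    ring
  | succ N ih =>
    have hfun : (fun a : ℝ => Real.sin (a / 2^(N+2)) * (2^(N+2) * Pp a (N+1) + 1))
        = fun a : ℝ => Real.sin (a - a / 2^(N+2)) := by
      apply Continuous.ext_on dense_non_pi_mult
      · apply Continuous.mul
        · exact Real.continuous_sin.comp (continuous_id.div_const _)
        · apply Continuous.add _ continuous_const
          apply Continuous.mul continuous_const
          unfold Pp
          apply continuous_finset_sum
          intro n _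
          apply continuous_finset_sum
          intro m _
          exact continuous_const.mul (Real.continuous_cos.comp ((continuous_const.mul continuous_id).div_const _))
      · exact Real.continuous_sin.comp (continuous_id.sub (continuous_id.div_const _))
      · intro a ha
        simp only []
        -- notation
        set c := a / 2^(N+2) with hc
        have ha2 : a = 2^(N+2) * c := by rw [hc]; field_simp
        have hco : Real.cos c ≠ 0 := by
          intro h
          obtain ⟨k, hk⟩ := Real.cos_eq_zero_iff.mp h
          apply ha (2^(N+1) * (2*k+1))
          rw [ha2, hk]
          push_cast
          ring
        -- inner sum manipulation
        have h2c : a / 2^(N+1) = 2 * c := by rw [hc]; ring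
        have hIH := ih a
        rw [h2c, Real.sin_two_mul, Real.sin_sub, Real.cos_two_mul, Real.sin_two_mul] at hIH
        have hPsplit : Pp a (N+1) = Pp a N
            + ∑ m ∈ Finset.Icc (1:ℕ) (2^(N+1) - 1),
                (-1:ℝ)^(m+1) / 2^(N+1) * Real.cos ((m:ℝ) * a / 2^(N+1)) := by
          unfold Pp
          rw [Finset.sum_Icc_succ_top (Nat.le_add_left 1 N)]
        have hsum : (2:ℝ)^(N+1) * ∑ m ∈ Finset.Icc (1:ℕ) (2^(N+1) - 1),
              (-1:ℝ)^(m+1) / 2^(N+1) * Real.cos ((m:ℝ) * a / 2^(N+1))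
            = ∑ m ∈ Finset.Icc (1:ℕ) (2^(N+1) - 1),
              (-1:ℝ)^(m+1) * Real.cos ((m:ℝ) * (2*c)) := by
          rw [Finset.mul_sum]
          apply Finset.sum_congr rfl
          intro m _
          rw [mul_div_assoc, h2c]
          have : (2:ℝ)^(N+1) ≠ 0 := by positivity
          field_simp
        have hodd : Odd (2^(N+1) - 1) :=
          Nat.Even.sub_odd Nat.one_le_two_pow ((Nat.even_pow).mpr ⟨even_two, N.succ_ne_zero⟩) odd_one
        have hC := alt_cos_sum (2*c) (2^(N+1) - 1)
        rw [show (2*c)/2 = c by ring, hodd.neg_one_pow,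
          show ((((2:ℕ)^(N+1) - 1 : ℕ) : ℝ) + 1/2) * (2*c) = a - c by
            rw [Nat.cast_sub Nat.one_le_two_pow, ha2]; push_cast; ring,
          Real.cos_sub] at hC
        rw [hPsplit]
        have hpy := Real.sin_sq_add_cos_sq c
        rw [Real.sin_sub]
        refine mul_left_cancel₀ hco ?_
        linear_combination hIH + Real.sin c * hC + Real.sin a * hpy + 2 * Real.sin c * Real.cos c * hsum
    intro a
    exact congrFun hfun a

theorem stmt_3 (a : ℝ) (ha : a ≠ 0) :
    ∃ S : ℝ,
      Filter.Tendsto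
        (fun N : ℕ => ∑ n ∈ Finset.Icc (1:ℕ) N, ∑ m ∈ Finset.Icc (1:ℕ) (2 ^ n - 1),
          (-1 : ℝ) ^ (m + 1) / 2 ^ n * Real.cos ((m:ℝ) * a / 2 ^ n))
        Filter.atTop (nhds S) ∧
      Real.sin a / a = S := by
  refine ⟨Real.sin a / a, ?_, rfl⟩
  show Filter.Tendsto (fun N : ℕ => Pp a N) Filter.atTop (nhds (Real.sin a / a))
  set b : ℕ → ℝ := fun N => a / 2^(N+1) with hbdef
  have hb0 : ∀ N, b N ≠ 0 := by
    intro N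
    exact div_ne_zero ha (by positivity)
  have hb : Filter.Tendsto b Filter.atTop (nhds 0) := by
    have h1 : Filter.Tendsto (fun N : ℕ => ((1:ℝ)/2)^(N+1)) Filter.atTop (nhds 0) :=
      (tendsto_pow_atTop_nhds_zero_of_lt_one (by norm_num) (by norm_num)).comp
        (Filter.tendsto_add_atTop_nat 1)
    have := h1.const_mul a
    rw [mul_zero] at this
    refine this.congr fun N => ?_
    rw [hbdef]
    simp [div_pow]
    ring
  -- eventually sin (b N) ≠ 0
  have hsinne : ∀ᶠ N in Filter.atTop, Real.sin (b N) ≠ 0 := by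
    have hev : ∀ᶠ N in Filter.atTop, |b N| < Real.pi := by
      have := Metric.tendsto_nhds.mp hb Real.pi Real.pi_pos
      simpa [Real.dist_eq] using this
    filter_upwards [hev] with N hN hzero
    obtain ⟨n, hn⟩ := Real.sin_eq_zero_iff.mp hzero
    have hnz : n ≠ 0 := by
      intro h
      rw [h] at hn
      exact hb0 N (by simpa using hn.symm)
    have h1 : (1:ℝ) ≤ |(n:ℝ)| := by
      have := Int.one_le_abs hnz
      calc (1:ℝ) ≤ (|n| : ℤ) := by exact_mod_cast this
        _ = |(n:ℝ)| := by push_cast; rfl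
    have : |b N| = |(n:ℝ)| * Real.pi := by
      rw [← hn, abs_mul, abs_of_pos Real.pi_pos]
    nlinarith [Real.pi_pos]
  -- closed form eventually
  have hform : ∀ᶠ N in Filter.atTop,
      Real.sin (a - b N) / (2^(N+1) * Real.sin (b N)) - 1/2^(N+1) = Pp a N := by
    filter_upwards [hsinne] with N hN
    have hkey := key_id N a
    have hbN : b N = a / 2^(N+1) := rfl
    rw [← hbN] at hkey
    have h2 : (2:ℝ)^(N+1) ≠ 0 := by positivity
    field_simp
    linear_combination (-1:ℝ) * hkey
  -- limits
  have hnum : Filter.Tendsto (fun N => Real.sin (a - b N)) Filter.atTop (nhds (Real.sin a)) := by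
    have h1 : Filter.Tendsto (fun N => a - b N) Filter.atTop (nhds a) := by
      have := hb.const_sub a
      simpa using this
    exact (Real.continuous_sin.tendsto a).comp h1
  have hden : Filter.Tendsto (fun N => (2:ℝ)^(N+1) * Real.sin (b N)) Filter.atTop (nhds a) := by
    have hslope : Filter.Tendsto (fun x : ℝ => Real.sin x / x) (nhdsWithin 0 {(0:ℝ)}ᶜ) (nhds 1) := by
      have h := (Real.hasDerivAt_sin 0)
      rw [hasDerivAt_iff_tendsto_slope] at h
      rw [Real.cos_zero] at h
      refine h.congr' ?_
      filter_upwards [self_mem_nhdsWithin] with x hx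
      simp [slope_def_field, div_eq_mul_inv]
      try ring
    have hbW : Filter.Tendsto b Filter.atTop (nhdsWithin 0 {(0:ℝ)}ᶜ) :=
      tendsto_nhdsWithin_of_tendsto_nhds_of_eventually_within b hb
        (Filter.Eventually.of_forall hb0)
    have h2 : Filter.Tendsto (fun N => Real.sin (b N) / b N) Filter.atTop (nhds 1) :=
      hslope.comp hbW
    have h3 := h2.const_mul a
    rw [mul_one] at h3
    refine h3.congr fun N => ?_
    have hbN : b N = a / 2^(N+1) := rfl
    rw [hbN]
    have h2' : (2:ℝ)^(N+1) ≠ 0 := by positivity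
    field_simp
    try ring
  have h4 : Filter.Tendsto
      (fun N => Real.sin (a - b N) / (2^(N+1) * Real.sin (b N)) - 1/2^(N+1))
      Filter.atTop (nhds (Real.sin a / a)) := by
    have hmain := hnum.div hden ha
    have hsmall : Filter.Tendsto (fun N : ℕ => (1:ℝ)/2^(N+1)) Filter.atTop (nhds 0) := by
      have h1 : Filter.Tendsto (fun N : ℕ => ((1:ℝ)/2)^(N+1)) Filter.atTop (nhds 0) :=
        (tendsto_pow_atTop_nhds_zero_of_lt_one (by norm_num) (by norm_num)).comp
          (Filter.tendsto_add_atTop_nat 1)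
      refine h1.congr fun N => ?_
      rw [div_pow, one_pow]
    have := hmain.sub hsmall
    simpa using this
  exact h4.congr' hform
end

section
/- Let b > 0 and let H : ℝ → ℝ be continuous on [-b, b]. Then ∫_{-b}^{b} H(x) dx = b ∑_{n=1}^{∞} ∑_{m=1}^{2^n - 1} (-1)^{m+1} 2^{-n} [H(m·b/2^n) + H(-m·b/2^n)], where for each n the inner sum is finite and the outer series over n converges. -/
open Finset

lemma step_lemma (b : ℝ) (G : ℝ → ℝ) (N : ℕ) :
    ∑ m ∈ Finset.Icc (1:ℕ) (2 ^ (N+1) - 1),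
      ((1:ℝ)/2^(N+1) - (-1:ℝ)^(m+1)/2^(N+1)) * G ((m:ℝ)*b/2^(N+1))
    = ∑ k ∈ Finset.Icc (1:ℕ) (2 ^ N - 1), (1:ℝ)/2^N * G ((k:ℝ)*b/2^N) := by
  have hpow : 2^(N+1) = 2 * 2^N := by ring
  have hsub : (Finset.Icc (1:ℕ) (2^N - 1)).image (fun k : ℕ => 2*k) ⊆ Finset.Icc 1 (2^(N+1)-1) := by
    intro m hm
    simp only [Finset.mem_image, Finset.mem_Icc] at hm ⊢
    obtain ⟨k, ⟨hk1, hk2⟩, rfl⟩ := hm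
    have h1 : 1 ≤ 2^N := Nat.one_le_two_pow
    omega
  calc ∑ m ∈ Finset.Icc (1:ℕ) (2 ^ (N+1) - 1),
      ((1:ℝ)/2^(N+1) - (-1:ℝ)^(m+1)/2^(N+1)) * G ((m:ℝ)*b/2^(N+1))
      = ∑ m ∈ (Finset.Icc (1:ℕ) (2^N - 1)).image (fun k : ℕ => 2*k),
      ((1:ℝ)/2^(N+1) - (-1:ℝ)^(m+1)/2^(N+1)) * G ((m:ℝ)*b/2^(N+1)) := by
        refine (Finset.sum_subset hsub ?_).symm
        intro m hm hm'
        simp only [Finset.mem_image, Finset.mem_Icc] at hm hm'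
        have hodd : ¬ (2 ∣ m) := by
          rintro ⟨k, rfl⟩
          have h1 : 1 ≤ 2^N := Nat.one_le_two_pow
          have hpow : 2^(N+1) = 2 * 2^N := by ring
          exact hm' ⟨k, ⟨by omega, by omega⟩, rfl⟩
        have : (-1:ℝ)^(m+1) = 1 :=
          Even.neg_one_pow (Nat.even_add_one.mpr (fun h => hodd h.two_dvd))
        rw [this]; ring
    _ = ∑ k ∈ Finset.Icc (1:ℕ) (2^N - 1),
      ((1:ℝ)/2^(N+1) - (-1:ℝ)^(2*k+1)/2^(N+1)) * G (((2*k : ℕ):ℝ)*b/2^(N+1)) := by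
        apply Finset.sum_image
        intro x _ y _ h; beta_reduce at h; omega
    _ = ∑ k ∈ Finset.Icc (1:ℕ) (2 ^ N - 1), (1:ℝ)/2^N * G ((k:ℝ)*b/2^N) := by
        apply Finset.sum_congr rfl
        intro k _
        have h1 : (-1:ℝ)^(2*k+1) = -1 := by
          rw [pow_succ, pow_mul]; norm_num
        have h2 : ((2*k : ℕ):ℝ)*b/2^(N+1) = (k:ℝ)*b/2^N := by
          push_cast; rw [pow_succ]; ring
        rw [h1, h2]
        congr 1
        rw [pow_succ]; ring

lemma telescope_lemma (b : ℝ) (G : ℝ → ℝ) (N : ℕ) :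
    ∑ n ∈ Finset.Icc (1:ℕ) N, ∑ m ∈ Finset.Icc (1:ℕ) (2^n-1),
      (-1:ℝ)^(m+1)/2^n * G ((m:ℝ)*b/2^n)
    = ∑ m ∈ Finset.Icc (1:ℕ) (2^N-1), (1:ℝ)/2^N * G ((m:ℝ)*b/2^N) := by
  induction N with
  | zero => simp
  | succ N ih =>
    rw [Finset.sum_Icc_succ_top (by omega : (1:ℕ) ≤ N+1), ih, ← step_lemma b G N]
    rw [← Finset.sum_add_distrib]
    apply Finset.sum_congr rfl
    intro m _
    ring

open Filter intervalIntegral in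
lemma riemann_lemma (b : ℝ) (hb : 0 < b) (G : ℝ → ℝ)
    (hG : ContinuousOn G (Set.Icc 0 b)) :
    Filter.Tendsto (fun N : ℕ => ∑ m ∈ Finset.range (2^N),
        (b/2^N) * G (((m:ℝ)+1)*b/2^N)) atTop (nhds (∫ x in (0:ℝ)..b, G x)) := by
  have hUC : UniformContinuousOn G (Set.Icc 0 b) :=
    (isCompact_Icc).uniformContinuousOn_of_continuous hG
  rw [Metric.tendsto_atTop]
  intro ε hε
  rw [Metric.uniformContinuousOn_iff] at hUC
  obtain ⟨δ, hδ, hδ'⟩ := hUC (ε / (2*b)) (by positivity)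
  -- choose N₀ with b / 2^N₀ < δ
  obtain ⟨N₀, hN₀⟩ : ∃ N₀ : ℕ, b / 2^N₀ < δ := by
    obtain ⟨n, hn⟩ := pow_unbounded_of_one_lt (b / δ) (by norm_num : (1:ℝ) < 2)
    exact ⟨n, by rw [div_lt_iff₀ (by positivity)]; rw [div_lt_iff₀ hδ] at hn; linarith⟩
  refine ⟨N₀, fun N hN => ?_⟩
  set c : ℝ := b / 2^N with hc
  have hc0 : 0 < c := by positivity
  have hcδ : c < δ := by
    refine lt_of_le_of_lt ?_ hN₀
    apply div_le_div_of_nonneg_left hb.le (by positivity)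
    exact pow_le_pow_right₀ (by norm_num) hN
  -- decompose integral
  have hint : ∀ i : ℕ, i < 2^N → IntervalIntegrable G MeasureTheory.volume ((i:ℝ)*c) (((i:ℝ)+1)*c) := by
    intro i hi
    apply (hG.mono ?_).intervalIntegrable
    rw [Set.uIcc_of_le (by nlinarith)]
    intro x hx
    have h1 : ((i:ℝ)+1)*c ≤ b := by
      have : ((i:ℝ)+1) ≤ 2^N := by
        have : (i:ℝ) + 1 ≤ ((2^N : ℕ) : ℝ) := by exact_mod_cast hi
        push_cast at this; exact this
      calc ((i:ℝ)+1)*c ≤ 2^N * c := by nlinarith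
        _ = b := by rw [hc]; field_simp
    constructor
    · have : (0:ℝ) ≤ (i:ℝ)*c := by positivity
      linarith [hx.1]
    · linarith [hx.2]
  have hdecomp : ∫ x in (0:ℝ)..b, G x
      = ∑ i ∈ Finset.range (2^N), ∫ x in ((i:ℝ)*c)..(((i:ℝ)+1)*c), G x := by
    have key := intervalIntegral.sum_integral_adjacent_intervals (μ := MeasureTheory.volume)
      (a := fun i : ℕ => (i:ℝ)*c) (n := 2^N) (f := G) (by intro i hi; push_cast; simpa using hint i hi)
    beta_reduce at key
    rw [show ((0:ℕ):ℝ) * c = 0 by simp, show ((2^N : ℕ) : ℝ)*c = b by push_cast; rw [hc]; field_simp] at key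
    rw [← key]
    apply Finset.sum_congr rfl
    intro i _
    push_cast
    ring_nf
  rw [Real.dist_eq, hdecomp, ← Finset.sum_sub_distrib]
  have hterm : ∀ i ∈ Finset.range (2^N),
      |(b/2^N) * G (((i:ℝ)+1)*b/2^N) - ∫ x in ((i:ℝ)*c)..(((i:ℝ)+1)*c), G x| ≤ ε/(2*b) * c := by
    intro i hi
    rw [Finset.mem_range] at hi
    have harg : ((i:ℝ)+1)*b/2^N = ((i:ℝ)+1)*c := by rw [hc]; ring
    have hle : (i:ℝ)*c ≤ ((i:ℝ)+1)*c := by nlinarith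
    have hub : ((i:ℝ)+1)*c ≤ b := by
      have h2 : ((i:ℝ)+1) ≤ 2^N := by
        have : (i:ℝ) + 1 ≤ ((2^N : ℕ) : ℝ) := by exact_mod_cast hi
        push_cast at this; exact this
      calc ((i:ℝ)+1)*c ≤ 2^N * c := by nlinarith
        _ = b := by rw [hc]; field_simp
    have hlb : (0:ℝ) ≤ (i:ℝ)*c := by positivity
    have hKmem : ((i:ℝ)+1)*c ∈ Set.Icc (0:ℝ) b := ⟨by linarith, hub⟩
    have hconst : (b/2^N) * G (((i:ℝ)+1)*b/2^N)
        = ∫ _x in ((i:ℝ)*c)..(((i:ℝ)+1)*c), G (((i:ℝ)+1)*c) := by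
      rw [intervalIntegral.integral_const, smul_eq_mul, harg]
      congr 1
      rw [hc]; ring
    rw [hconst, ← intervalIntegral.integral_sub (intervalIntegrable_const) (hint i hi)]
    have hb1 : |((i:ℝ)+1)*c - (i:ℝ)*c| = c := by
      rw [abs_of_nonneg (by linarith)]; ring
    calc |∫ x in ((i:ℝ)*c)..(((i:ℝ)+1)*c), (G (((i:ℝ)+1)*c) - G x)|
        ≤ ε/(2*b) * |((i:ℝ)+1)*c - (i:ℝ)*c| := by
          rw [← Real.norm_eq_abs]
          apply intervalIntegral.norm_integral_le_of_norm_le_const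
          intro x hx
          rw [Real.norm_eq_abs]
          rw [Set.uIoc_of_le hle] at hx
          have hxmem : x ∈ Set.Icc (0:ℝ) b := ⟨by linarith [hx.1], by linarith [hx.2]⟩
          have hdist : dist (((i:ℝ)+1)*c) x < δ := by
            rw [Real.dist_eq, abs_of_nonneg (by linarith [hx.2])]
            have : ((i:ℝ)+1)*c - x < c := by linarith [hx.1]
            linarith
          have := hδ' _ hKmem _ hxmem hdist
          rw [Real.dist_eq] at this
          exact le_of_lt this
      _ = ε/(2*b) * c := by rw [hb1]
  calc |∑ i ∈ Finset.range (2^N),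
        ((b/2^N) * G (((i:ℝ)+1)*b/2^N) - ∫ x in ((i:ℝ)*c)..(((i:ℝ)+1)*c), G x)|
      ≤ ∑ i ∈ Finset.range (2^N),
        |(b/2^N) * G (((i:ℝ)+1)*b/2^N) - ∫ x in ((i:ℝ)*c)..(((i:ℝ)+1)*c), G x| :=
        Finset.abs_sum_le_sum_abs _ _
    _ ≤ ∑ _i ∈ Finset.range (2^N), ε/(2*b) * c := Finset.sum_le_sum hterm
    _ = 2^N * (ε/(2*b) * c) := by rw [Finset.sum_const, Finset.card_range, nsmul_eq_mul]; push_cast; ring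
    _ = ε/2 := by rw [hc]; field_simp
    _ < ε := by linarith

theorem stmt_4 (b : ℝ) (hb : 0 < b) (H : ℝ → ℝ)
    (hH : ContinuousOn H (Set.Icc (-b) b)) :
    ∃ S : ℝ,
      Filter.Tendsto
        (fun N : ℕ => ∑ n ∈ Finset.Icc (1:ℕ) N, ∑ m ∈ Finset.Icc (1:ℕ) (2 ^ n - 1),
          (-1 : ℝ) ^ (m + 1) / 2 ^ n * (H ((m:ℝ) * b / 2 ^ n) + H (-((m:ℝ) * b / 2 ^ n))))
        Filter.atTop (nhds S) ∧
      ∫ x in (-b)..b, H x = b * S := by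
  have hb' : b ≠ 0 := ne_of_gt hb
  set G : ℝ → ℝ := fun x => H x + H (-x) with hGdef
  have hsub1 : Set.Icc (0:ℝ) b ⊆ Set.Icc (-b) b := Set.Icc_subset_Icc (by linarith) le_rfl
  have hHneg : ContinuousOn (fun x => H (-x)) (Set.Icc 0 b) := by
    apply ContinuousOn.comp hH continuous_neg.continuousOn
    intro x hx
    exact ⟨by simpa using hx.2, by simp at hx ⊢; linarith [hx.1]⟩
  have hGc : ContinuousOn G (Set.Icc 0 b) :=
    ContinuousOn.add (hH.mono hsub1) hHneg
  set I : ℝ := ∫ x in (0:ℝ)..b, G x with hIdef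
  -- step 1: the partial sums equal the dyadic Riemann sums
  have hpartial : ∀ N : ℕ,
      (∑ n ∈ Finset.Icc (1:ℕ) N, ∑ m ∈ Finset.Icc (1:ℕ) (2 ^ n - 1),
          (-1 : ℝ) ^ (m + 1) / 2 ^ n * (H ((m:ℝ) * b / 2 ^ n) + H (-((m:ℝ) * b / 2 ^ n))))
      = ∑ m ∈ Finset.Icc (1:ℕ) (2^N-1), (1:ℝ)/2^N * G ((m:ℝ)*b/2^N) := by
    intro N
    exact telescope_lemma b G N
  -- step 2: b * (dyadic sum) = full Riemann sum minus endpoint term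
  have hBR : ∀ N : ℕ,
      (∑ m ∈ Finset.Icc (1:ℕ) (2^N-1), (1:ℝ)/2^N * G ((m:ℝ)*b/2^N))
      = ((∑ m ∈ Finset.range (2^N), (b/2^N) * G (((m:ℝ)+1)*b/2^N)) - (b/2^N) * G b) / b := by
    intro N
    have h1 : ∑ m ∈ Finset.range (2^N), (b/2^N) * G (((m:ℝ)+1)*b/2^N)
        = ∑ m ∈ Finset.Icc (1:ℕ) (2^N), (b/2^N) * G ((m:ℝ)*b/2^N) := by
      have : Finset.Icc (1:ℕ) (2^N) = Finset.Ico (1:ℕ) (2^N+1) := by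
        rw [Finset.Ico_add_one_right_eq_Icc]
      rw [this, Finset.sum_Ico_eq_sum_range]
      simp only [Nat.add_sub_cancel]
      apply Finset.sum_congr rfl
      intro i _
      push_cast
      ring_nf
    have h2 : ∑ m ∈ Finset.Icc (1:ℕ) (2^N), (b/2^N) * G ((m:ℝ)*b/2^N)
        = (∑ m ∈ Finset.Icc (1:ℕ) (2^N-1), (b/2^N) * G ((m:ℝ)*b/2^N)) + (b/2^N) * G b := by
      have h3 : 2^N = (2^N - 1) + 1 := by
        have := Nat.one_le_two_pow (n := N); omega
      rw [h3, Finset.sum_Icc_succ_top (by omega)]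
      congr 1
      rw [← h3]
      congr 1
      push_cast
      field_simp
    rw [h1, h2, add_sub_cancel_right, Finset.sum_div]
    apply Finset.sum_congr rfl
    intro m _
    field_simp
  -- step 3: convergence
  have hR := riemann_lemma b hb G hGc
  have htend : Filter.Tendsto
      (fun N : ℕ => ((∑ m ∈ Finset.range (2^N), (b/2^N) * G (((m:ℝ)+1)*b/2^N)) - (b/2^N) * G b) / b)
      Filter.atTop (nhds (I / b)) := by
    apply Filter.Tendsto.div_const
    have hzero : Filter.Tendsto (fun N : ℕ => (b/2^N) * G b) Filter.atTop (nhds 0) := by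
      have : Filter.Tendsto (fun N : ℕ => ((1:ℝ)/2)^N) Filter.atTop (nhds 0) :=
        tendsto_pow_atTop_nhds_zero_of_lt_one (by norm_num) (by norm_num)
      have := this.const_mul (b * G b)
      rw [mul_zero] at this
      convert this using 2 with N
      rw [div_pow, one_pow]
      ring
    simpa using hR.sub hzero
  -- step 4: the integral identity
  have hint0b : IntervalIntegrable H MeasureTheory.volume 0 b := by
    apply (hH.mono ?_).intervalIntegrable
    rw [Set.uIcc_of_le (by linarith)]
    exact hsub1
  have hintneg : IntervalIntegrable (fun x => H (-x)) MeasureTheory.volume 0 b := by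
    apply (hHneg.mono ?_).intervalIntegrable
    rw [Set.uIcc_of_le (by linarith)]
  have hintm : IntervalIntegrable H MeasureTheory.volume (-b) 0 := by
    apply (hH.mono ?_).intervalIntegrable
    rw [Set.uIcc_of_le (by linarith)]
    exact Set.Icc_subset_Icc le_rfl (by linarith)
  have hI : ∫ x in (-b)..b, H x = I := by
    rw [hIdef]
    have hsplit : ∫ x in (-b)..b, H x = (∫ x in (-b)..(0:ℝ), H x) + ∫ x in (0:ℝ)..b, H x :=
      (intervalIntegral.integral_add_adjacent_intervals hintm hint0b).symm
    have hneg : ∫ x in (0:ℝ)..b, H (-x) = ∫ x in (-b)..(0:ℝ), H x := by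
      rw [intervalIntegral.integral_comp_neg (fun x => H x)]
      norm_num
    have hGint : ∫ x in (0:ℝ)..b, G x
        = (∫ x in (0:ℝ)..b, H x) + ∫ x in (0:ℝ)..b, H (-x) :=
      intervalIntegral.integral_add hint0b hintneg
    rw [hsplit, hGint, hneg]
    ring
  refine ⟨I / b, ?_, ?_⟩
  · have : (fun N : ℕ => ∑ n ∈ Finset.Icc (1:ℕ) N, ∑ m ∈ Finset.Icc (1:ℕ) (2 ^ n - 1),
          (-1 : ℝ) ^ (m + 1) / 2 ^ n * (H ((m:ℝ) * b / 2 ^ n) + H (-((m:ℝ) * b / 2 ^ n))))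
        = fun N : ℕ => ((∑ m ∈ Finset.range (2^N), (b/2^N) * G (((m:ℝ)+1)*b/2^N)) - (b/2^N) * G b) / b := by
      funext N
      rw [hpartial N, hBR N]
    rw [this]
    exact htend
  · rw [hI]
    field_simp
end

section
/- For every real number x, sin(x) = x · ∑_{n=1}^{∞} ∑_{m=1}^{2^n - 1} (-1)^{m+1} 2^{-n} cos(m·x/2^n), where for each n the inner sum is finite and the outer series over n converges. -/
open Finset Real Filter

private lemma tele_closed (θ : ℝ) (K : ℕ) :
    ∑ m ∈ Icc (1:ℕ) K, 2 * Real.sin (θ/2) * Real.cos (m*θ)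
      = Real.sin (K*θ + θ/2) - Real.sin (θ/2) := by
  induction K with
  | zero => simp
  | succ K ih =>
    rw [Finset.sum_Icc_succ_top (by omega : 1 ≤ K+1), ih]
    have h := Real.sin_sub_sin ((K+1)*θ + θ/2) (K*θ + θ/2)
    push_cast at h ⊢
    ring_nf at h ⊢
    linarith

private lemma altsplit (g : ℕ → ℝ) (K : ℕ) :
    ∑ m ∈ Icc (1:ℕ) (2*K+1), (-1:ℝ)^(m+1) * g m
      = ∑ m ∈ Icc (1:ℕ) (2*K+1), g m - 2 * ∑ j ∈ Icc (1:ℕ) K, g (2*j) := by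
  induction K with
  | zero => simp
  | succ K ih =>
    have e1 : 2*(K+1)+1 = (2*K+1) + 1 + 1 := by omega
    rw [e1, Finset.sum_Icc_succ_top (by omega), Finset.sum_Icc_succ_top (by omega),
        Finset.sum_Icc_succ_top (by omega : 1 ≤ 2*K+1+1+1),
        Finset.sum_Icc_succ_top (by omega : 1 ≤ 2*K+1+1),
        Finset.sum_Icc_succ_top (by omega : 1 ≤ K+1), ih]
    have h1 : (-1:ℝ)^(2*K+1+1+1) = -1 := Odd.neg_one_pow ⟨K+1, by omega⟩
    have h2 : (-1:ℝ)^(2*K+2+1+1) = 1 := Even.neg_one_pow ⟨K+2, by omega⟩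
    have e2 : 2*(K+1) = 2*K+1+1 := by omega
    have e3 : 2*K+2+1 = 2*K+1+1+1 := by omega
    rw [h1, h2, e2, e3]
    ring

private lemma partialsum (x : ℝ) (N : ℕ) :
    ∑ n ∈ Icc (1:ℕ) N, ∑ m ∈ Icc (1:ℕ) (2^n - 1),
        (-1:ℝ)^(m+1) / 2^n * Real.cos ((m:ℝ) * x / 2^n)
      = (1/2^N) * ∑ m ∈ Icc (1:ℕ) (2^N - 1), Real.cos ((m:ℝ) * x / 2^N) := by
  induction N with
  | zero => simp
  | succ N ih =>
    rw [Finset.sum_Icc_succ_top (by omega : 1 ≤ N+1), ih]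
    have hp : (1:ℕ) ≤ 2^N := Nat.one_le_two_pow
    have e1 : 2^(N+1) - 1 = 2*(2^N - 1) + 1 := by
      have : 2^(N+1) = 2*2^N := by rw [pow_succ]; ring
      omega
    have e2 : ∀ m : ℕ, (-1:ℝ)^(m+1) / 2^(N+1) * Real.cos ((m:ℝ) * x / 2^(N+1))
        = (1/2^(N+1)) * ((-1:ℝ)^(m+1) * Real.cos ((m:ℝ) * x / 2^(N+1))) := by
      intro m; ring
    simp_rw [e2]
    rw [← Finset.mul_sum, e1, altsplit (fun m => Real.cos ((m:ℝ) * x / 2^(N+1))) (2^N - 1)]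
    have e3 : ∑ j ∈ Icc (1:ℕ) (2^N - 1), Real.cos (((2*j : ℕ):ℝ) * x / 2^(N+1))
        = ∑ m ∈ Icc (1:ℕ) (2^N - 1), Real.cos ((m:ℝ) * x / 2^N) := by
      refine Finset.sum_congr rfl fun j _ => ?_
      congr 1
      push_cast
      rw [pow_succ]
      field_simp
    rw [e3, ← e1]
    ring

private lemma tlim (x : ℝ) : Tendsto (fun N : ℕ => x / 2^(N+1)) atTop (nhds 0) := by
  have h : Tendsto (fun N : ℕ => (1/2:ℝ)^(N+1)) atTop (nhds 0) := by
    have := tendsto_pow_atTop_nhds_zero_of_lt_one (by norm_num : (0:ℝ) ≤ 1/2) (by norm_num)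
    exact this.comp (tendsto_add_atTop_nat 1)
  have := h.const_mul x
  simpa [div_eq_mul_inv, mul_comm, one_div, inv_pow] using this

private lemma sinc_lim :
    Tendsto (fun t : ℝ => Real.sin t / t) (nhdsWithin 0 {0}ᶜ) (nhds 1) := by
  have h : HasDerivAt Real.sin 1 0 := by simpa using Real.hasDerivAt_sin 0
  have := (hasDerivAt_iff_tendsto_slope.mp h)
  refine this.congr' ?_
  filter_upwards [self_mem_nhdsWithin] with t ht
  simp [slope_def_field, div_eq_mul_inv]

private lemma mainlim (x : ℝ) (hx : x ≠ 0) :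
    Tendsto (fun N : ℕ => (1/2^N) * ∑ m ∈ Icc (1:ℕ) (2^N - 1), Real.cos ((m:ℝ) * x / 2^N))
      atTop (nhds (Real.sin x / x)) := by
  set t : ℕ → ℝ := fun N => x / 2^(N+1) with ht
  have htn : ∀ N, t N ≠ 0 := fun N => div_ne_zero hx (by positivity)
  have ht0 : Tendsto t atTop (nhds 0) := tlim x
  have hden : Tendsto (fun N => (2:ℝ)^(N+1) * Real.sin (t N)) atTop (nhds x) := by
    have h1 : Tendsto (fun N => Real.sin (t N) / t N) atTop (nhds 1) := by
      apply sinc_lim.comp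
      rw [tendsto_nhdsWithin_iff]
      exact ⟨ht0, Eventually.of_forall fun N => htn N⟩
    have h2 := h1.const_mul x
    rw [mul_one] at h2
    refine h2.congr fun N => ?_
    rw [ht]
    field_simp
  have hnum : Tendsto (fun N => Real.sin (x - t N) - Real.sin (t N)) atTop
      (nhds (Real.sin x)) := by
    have h1 : Tendsto (fun N => Real.sin (x - t N)) atTop (nhds (Real.sin x)) := by
      have : Tendsto (fun N => x - t N) atTop (nhds (x - 0)) := tendsto_const_nhds.sub ht0
      rw [sub_zero] at this
      exact (Real.continuous_sin.tendsto x).comp this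
    have h2 : Tendsto (fun N => Real.sin (t N)) atTop (nhds 0) := by
      have := (Real.continuous_sin.tendsto 0).comp ht0
      simpa [Function.comp_def] using this
    simpa using h1.sub h2
  have hdiv := hnum.div hden hx
  refine hdiv.congr' ?_
  have hev : ∀ᶠ N in atTop, |t N| < π := by
    have habs : Tendsto (fun N => |t N|) atTop (nhds 0) := by simpa using ht0.abs
    exact habs.eventually (eventually_lt_nhds Real.pi_pos)
  filter_upwards [hev] with N hN
  have hsne : Real.sin (t N) ≠ 0 := by
    intro h
    rcases Real.sin_eq_zero_iff.mp h with ⟨k, hk⟩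
    have hne : t N ≠ 0 := htn N
    rcases abs_lt.mp hN with ⟨h1, h2⟩
    have hk0 : k ≠ 0 := by rintro rfl; simp at hk; exact hne hk.symm
    have hk1 : |(k:ℝ)| ≥ 1 := by
      have : (1:ℝ) ≤ |(k:ℝ)| := by exact_mod_cast Int.one_le_abs hk0
      linarith
    have : |(k:ℝ) * π| ≥ π := by
      rw [abs_mul, abs_of_pos Real.pi_pos]
      nlinarith [Real.pi_pos]
    rw [← hk] at hN
    linarith
  have hp : (1:ℕ) ≤ 2^N := Nat.one_le_two_pow
  have key := tele_closed (x / 2^N) (2^N - 1)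
  have harg : ((2^N - 1 : ℕ):ℝ) * (x/2^N) + (x/2^N)/2 = x - t N := by
    have hc : ((2^N - 1 : ℕ):ℝ) = 2^N - 1 := by
      push_cast [Nat.cast_sub hp]; norm_num
    rw [hc, ht]
    have h2 : (2:ℝ)^N ≠ 0 := by positivity
    field_simp
    ring
  have harg2 : (x/2^N)/2 = t N := by
    show x/2^N/2 = x/2^(N+1)
    rw [pow_succ]; ring
  rw [harg, harg2] at key
  have key2 : ∑ m ∈ Icc (1:ℕ) (2^N - 1), Real.cos ((m:ℝ) * x / 2^N)
      = (Real.sin (x - t N) - Real.sin (t N)) / (2 * Real.sin (t N)) := by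
    rw [eq_div_iff (by simpa using mul_ne_zero two_ne_zero hsne)]
    rw [← key, Finset.sum_mul]
    refine Finset.sum_congr rfl fun m _ => ?_
    rw [← harg2]
    ring_nf
  rw [key2]
  simp only [Pi.div_apply]
  rw [pow_succ, div_mul_div_comm, one_mul, ← mul_assoc]

theorem stmt_5 (x : ℝ) :
    ∃ S : ℝ,
      Filter.Tendsto
        (fun N : ℕ => ∑ n ∈ Finset.Icc (1:ℕ) N, ∑ m ∈ Finset.Icc (1:ℕ) (2 ^ n - 1),
          (-1 : ℝ) ^ (m + 1) / 2 ^ n * Real.cos ((m:ℝ) * x / 2 ^ n))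
        Filter.atTop (nhds S) ∧
      Real.sin x = x * S := by
  by_cases hx : x = 0
  · refine ⟨1, ?_, by simp [hx]⟩
    have h : ∀ N : ℕ, ∑ n ∈ Finset.Icc (1:ℕ) N, ∑ m ∈ Finset.Icc (1:ℕ) (2 ^ n - 1),
        (-1 : ℝ) ^ (m + 1) / 2 ^ n * Real.cos ((m:ℝ) * x / 2 ^ n)
        = 1 - (1/2:ℝ)^N := by
      intro N
      rw [partialsum]
      subst hx
      have hp : (1:ℕ) ≤ 2^N := Nat.one_le_two_pow
      simp only [mul_zero, zero_div, Real.cos_zero]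
      rw [Finset.sum_const, nsmul_eq_mul, Nat.card_Icc]
      push_cast [Nat.cast_sub hp]
      have h2 : (2:ℝ)^N ≠ 0 := by positivity
      field_simp
      rw [mul_sub, mul_one, ← mul_pow]; norm_num
    simp_rw [h]
    have : Tendsto (fun N : ℕ => 1 - (1/2:ℝ)^N) atTop (nhds (1 - 0)) :=
      tendsto_const_nhds.sub
        (tendsto_pow_atTop_nhds_zero_of_lt_one (by norm_num) (by norm_num))
    simpa using this
  · refine ⟨Real.sin x / x, ?_, by field_simp⟩
    have h := mainlim x hx
    refine h.congr fun N => ?_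
    rw [partialsum]
end

section
/- For every real number x, cos(x) = 1 - x · ∑_{n=1}^{∞} ∑_{m=1}^{2^n - 1} (-1)^{m+1} 2^{-n} sin(m·x/2^n), where for each n the inner sum is finite and the outer series over n converges. -/
open Finset Filter Real Topology

private lemma sum_range_two_mul_aux (M : ℕ) (f : ℕ → ℝ) :
    ∑ m ∈ range (2 * M), f m = ∑ k ∈ range M, (f (2 * k) + f (2 * k + 1)) := by
  induction M with
  | zero => simp
  | succ M ih =>
    have h2 : 2 * (M + 1) = (2 * M + 1) + 1 := by ring
    rw [h2, sum_range_succ, sum_range_succ, ih, sum_range_succ, add_assoc]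

private lemma sum_Icc_one_aux (K : ℕ) (f : ℕ → ℝ) (h0 : f 0 = 0) :
    ∑ m ∈ Icc 1 K, f m = ∑ m ∈ range (K + 1), f m := by
  rw [Finset.sum_range_succ', h0, add_zero, ← Finset.Ico_add_one_right_eq_Icc,
    Finset.sum_Ico_eq_sum_range]
  simp [Nat.add_comm]

private lemma sin_sum_closed (h : ℝ) : ∀ K : ℕ,
    2 * Real.sin (h / 2) * ∑ m ∈ range K, Real.sin ((m : ℝ) * h)
      = Real.cos (h / 2) - Real.cos ((K : ℝ) * h - h / 2) := by
  intro K
  induction K with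
  | zero => simp
  | succ K ih =>
    rw [sum_range_succ, mul_add, ih]
    push_cast
    have e : ((K : ℝ) + 1) * h - h / 2 = (K : ℝ) * h + h / 2 := by ring
    rw [e, Real.cos_sub, Real.cos_add]
    ring

theorem stmt_6 (x : ℝ) :
    ∃ S : ℝ,
      Filter.Tendsto
        (fun N : ℕ => ∑ n ∈ Finset.Icc (1:ℕ) N, ∑ m ∈ Finset.Icc (1:ℕ) (2 ^ n - 1),
          (-1 : ℝ) ^ (m + 1) / 2 ^ n * Real.sin ((m:ℝ) * x / 2 ^ n))
        Filter.atTop (nhds S) ∧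
      Real.cos x = 1 - x * S := by
  rcases eq_or_ne x 0 with rfl | hx
  · refine ⟨0, ?_, by simp⟩
    have : (fun N : ℕ => ∑ n ∈ Finset.Icc (1:ℕ) N, ∑ m ∈ Finset.Icc (1:ℕ) (2 ^ n - 1),
        (-1 : ℝ) ^ (m + 1) / 2 ^ n * Real.sin ((m:ℝ) * 0 / 2 ^ n)) = fun _ => (0:ℝ) := by
      funext N; simp
    rw [this]
    exact tendsto_const_nhds
  · -- main case
    set G : ℕ → ℝ := fun n => ∑ m ∈ range (2 ^ n), Real.sin ((m:ℝ) * x / 2 ^ n) / 2 ^ n with hGdef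
    -- Step 1: the inner sum telescopes: S_{n+1} = G (n+1) - G n
    have step1 : ∀ n : ℕ,
        (∑ m ∈ Finset.Icc (1:ℕ) (2 ^ (n+1) - 1),
          (-1 : ℝ) ^ (m + 1) / 2 ^ (n+1) * Real.sin ((m:ℝ) * x / 2 ^ (n+1)))
          = G (n+1) - G n := by
      intro n
      have hpos : 0 < 2 ^ (n+1) := Nat.pow_pos (by norm_num)
      have hpow : (2:ℕ) ^ (n+1) - 1 + 1 = 2 ^ (n+1) := Nat.succ_pred_eq_of_pos hpos
      rw [sum_Icc_one_aux _ _ (by simp), hpow]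
      have h2 : (2:ℕ) ^ (n+1) = 2 * 2 ^ n := by rw [pow_succ]; ring
      rw [h2, sum_range_two_mul_aux]
      simp only [hGdef]
      rw [h2, sum_range_two_mul_aux, ← Finset.sum_sub_distrib]
      apply Finset.sum_congr rfl
      intro k _
      have hn : (2:ℝ) ^ n ≠ 0 := by positivity
      have e1 : ((2 * k : ℕ) : ℝ) * x / 2 ^ (n+1) = (k:ℝ) * x / 2 ^ n := by
        push_cast
        rw [pow_succ]
        field_simp
      rw [← e1]
      have hodd' : Odd (2 * k + 1) := ⟨k, by ring⟩
      have hodd : ((-1:ℝ)) ^ (2 * k + 1) = -1 := hodd'.neg_one_pow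
      have heven : ((-1:ℝ)) ^ (2 * k + 1 + 1) = 1 := by
        rw [show 2 * k + 1 + 1 = 2 * (k + 1) by ring]
        exact (even_two_mul (k+1)).neg_one_pow
      rw [hodd, heven]
      rw [pow_succ]
      field_simp
      ring
    -- Step 2: telescoping over n
    have step2 : ∀ N : ℕ,
        (∑ n ∈ Finset.Icc (1:ℕ) N, ∑ m ∈ Finset.Icc (1:ℕ) (2 ^ n - 1),
          (-1 : ℝ) ^ (m + 1) / 2 ^ n * Real.sin ((m:ℝ) * x / 2 ^ n)) = G N := by
      intro N
      induction N with
      | zero => simp [hGdef]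
      | succ N ih =>
        rw [Finset.sum_Icc_succ_top (by omega), ih, step1 N]
        ring
    -- Step 3: closed form for G
    have step3 : ∀ N : ℕ,
        2 * Real.sin (x / 2 ^ (N+1)) * ((2:ℝ) ^ N * G N)
          = Real.cos (x / 2 ^ (N+1)) - Real.cos (x - x / 2 ^ (N+1)) := by
      intro N
      have hn : (2:ℝ) ^ N ≠ 0 := by positivity
      have hGs : (2:ℝ) ^ N * G N = ∑ m ∈ range (2 ^ N), Real.sin ((m:ℝ) * (x / 2 ^ N)) := by
        simp only [hGdef]
        rw [← Finset.sum_div, mul_comm ((2:ℝ) ^ N), div_mul_cancel₀ _ hn]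
        apply Finset.sum_congr rfl
        intro m _
        rw [mul_div_assoc]
      rw [hGs]
      have key := sin_sum_closed (x / 2 ^ N) (2 ^ N)
      have e2 : x / 2 ^ N / 2 = x / 2 ^ (N+1) := by
        rw [pow_succ]; ring
      have e3 : ((2 ^ N : ℕ) : ℝ) * (x / 2 ^ N) = x := by
        push_cast
        field_simp
      rw [e2, e3] at key
      exact key
    -- Step 4: limit
    set u : ℕ → ℝ := fun N => x / 2 ^ (N+1) with hudef
    have hu0 : ∀ N, u N ≠ 0 := fun N => div_ne_zero hx (by positivity)
    have hu : Tendsto u atTop (𝓝 0) := by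
      have h12 : Tendsto (fun N : ℕ => (1/2 : ℝ) ^ N) atTop (𝓝 0) :=
        tendsto_pow_atTop_nhds_zero_of_lt_one (by norm_num) (by norm_num)
      have : (fun N : ℕ => x / 2 * (1/2:ℝ) ^ N) = u := by
        funext N
        simp only [hudef]
        rw [pow_succ, one_div, inv_pow]
        rw [div_eq_mul_inv, div_eq_mul_inv, mul_assoc, ← mul_inv]
        ring
      rw [← this]
      simpa using (h12.const_mul (x/2))
    have hcos1 : Tendsto (fun N => Real.cos (u N)) atTop (𝓝 1) := by
      have := (Real.continuous_cos.tendsto (0:ℝ)).comp hu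
      rwa [Real.cos_zero] at this
    have hcos2 : Tendsto (fun N => Real.cos (x - u N)) atTop (𝓝 (Real.cos x)) := by
      have hsub : Tendsto (fun N => x - u N) atTop (𝓝 x) := by
        simpa using tendsto_const_nhds.sub hu
      exact (Real.continuous_cos.tendsto x).comp hsub
    have hsin : Tendsto (fun N => Real.sin (u N) / u N) atTop (𝓝 1) := by
      have hd := Real.hasDerivAt_sin 0
      rw [hasDerivAt_iff_tendsto_slope] at hd
      have hu' : Tendsto u atTop (𝓝[≠] (0:ℝ)) :=
        tendsto_nhdsWithin_iff.2 ⟨hu, Filter.Eventually.of_forall fun N => hu0 N⟩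
      have := hd.comp hu'
      rw [Real.cos_zero] at this
      refine this.congr fun N => ?_
      simp [Function.comp, slope_def_field, div_eq_inv_mul]
    have hq : Tendsto (fun N => x * (Real.sin (u N) / u N)) atTop (𝓝 x) := by
      simpa using tendsto_const_nhds.mul hsin
    have hE : Tendsto (fun N => (Real.cos (u N) - Real.cos (x - u N)) /
        (x * (Real.sin (u N) / u N))) atTop (𝓝 ((1 - Real.cos x) / x)) :=
      (hcos1.sub hcos2).div hq hx
    -- eventual equality of G with the closed-form expression
    have habs : ∀ᶠ N in atTop, |u N| < π := by
      have habs0 : Tendsto (fun N => |u N|) atTop (𝓝 0) := by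
        simpa using hu.abs
      exact habs0.eventually_lt_const Real.pi_pos
    have hev : ∀ᶠ N in atTop, G N = (Real.cos (u N) - Real.cos (x - u N)) /
        (x * (Real.sin (u N) / u N)) := by
      filter_upwards [habs] with N hN
      have hlt := abs_lt.1 hN
      have hsne : Real.sin (u N) ≠ 0 := by
        intro h0
        exact hu0 N ((Real.sin_eq_zero_iff_of_lt_of_lt hlt.1 hlt.2).1 h0)
      have hn : (2:ℝ) ^ N ≠ 0 := by positivity
      have hxe : x * (Real.sin (u N) / u N) = 2 * 2 ^ N * Real.sin (u N) := by
        simp only [hudef]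
        rw [pow_succ]
        field_simp
      have hne : x * (Real.sin (u N) / u N) ≠ 0 := by
        rw [hxe]
        positivity
      rw [eq_div_iff hne]
      have hG := step3 N
      linear_combination hG + G N * hxe
    refine ⟨(1 - Real.cos x) / x, ?_, by field_simp; ring⟩
    have hfun : (fun N : ℕ => ∑ n ∈ Finset.Icc (1:ℕ) N, ∑ m ∈ Finset.Icc (1:ℕ) (2 ^ n - 1),
        (-1 : ℝ) ^ (m + 1) / 2 ^ n * Real.sin ((m:ℝ) * x / 2 ^ n)) = G := funext step2
    rw [hfun]
    exact hE.congr' (hev.mono fun N h => h.symm)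
end

section
/- For all real numbers a and b with b > 0, ∫_0^b (sin(a·x)/x) dx = ∑_{n=1}^{∞} ∑_{m=1}^{2^n - 1} ((-1)^{m+1}/m) · sin(m·b·a/2^n), where for each n the inner sum is finite and the outer series over n converges. (The integrand is extended continuously by the value a at x = 0.) -/
open Filter Finset MeasureTheory intervalIntegral Real



noncomputable def gg : ℝ → ℝ := fun t => if t = 0 then 1 else Real.sin t / t

lemma gg_cont : Continuous gg := by
  rw [continuous_iff_continuousAt]
  intro x
  by_cases hx : x = 0
  · subst hx
    have h0 : Tendsto gg (nhdsWithin 0 {0}ᶜ) (nhds 1) := by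
      have h1 : Tendsto (slope Real.sin 0) (nhdsWithin 0 {0}ᶜ) (nhds 1) := by
        have := hasDerivAt_iff_tendsto_slope.mp (Real.hasDerivAt_sin 0)
        simpa using this
      refine h1.congr' ?_
      filter_upwards [self_mem_nhdsWithin] with t ht
      have ht' : t ≠ 0 := ht
      simp [slope, gg, ht', Real.sin_zero, div_eq_inv_mul]
    have h2 : Tendsto gg (pure (0:ℝ)) (nhds 1) := by
      have := tendsto_pure_nhds gg 0
      rwa [show gg 0 = 1 from if_pos rfl] at this
    have := h0.sup h2
    rw [nhdsNE_sup_pure] at this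
    simpa [ContinuousAt, gg] using this
  · have hc : ContinuousAt (fun t => Real.sin t / t) x :=
      (Real.continuous_sin.continuousAt).div continuousAt_id hx
    refine hc.congr ?_
    filter_upwards [isOpen_compl_singleton.mem_nhds hx] with t ht
    exact (if_neg (ht : t ≠ 0)).symm

lemma gg_intble (x y : ℝ) : IntervalIntegrable gg volume x y :=
  gg_cont.intervalIntegrable x y


lemma tele (c : ℝ) (N : ℕ) :
    (∑ n ∈ Finset.Icc (1:ℕ) N, ∑ m ∈ Finset.Icc (1:ℕ) (2 ^ n - 1),
      (-1 : ℝ) ^ (m + 1) / (m:ℝ) * Real.sin ((m:ℝ) * c / 2 ^ n))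
    = ∑ m ∈ Finset.Icc (1:ℕ) (2 ^ N - 1), Real.sin ((m:ℝ) * c / 2 ^ N) / m := by
  induction N with
  | zero => simp
  | succ N ih =>
    rw [Finset.sum_Icc_succ_top (by omega : (1:ℕ) ≤ N + 1), ih]
    set h : ℕ → ℝ := fun m => Real.sin ((m:ℝ) * c / 2 ^ (N+1)) / m
      - (-1 : ℝ) ^ (m + 1) / (m:ℝ) * Real.sin ((m:ℝ) * c / 2 ^ (N+1)) with hh
    have h2 : (2:ℕ) ^ (N+1) = 2 * 2 ^ N := by ring
    have key : (∑ m ∈ Finset.Icc (1:ℕ) (2 ^ N - 1), Real.sin ((m:ℝ) * c / 2 ^ N) / m)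
        = ∑ m ∈ Finset.Icc (1:ℕ) (2 ^ (N+1) - 1), h m := by
      have step1 : ∀ k ∈ Finset.Icc (1:ℕ) (2 ^ N - 1),
          Real.sin ((k:ℝ) * c / 2 ^ N) / k = h (2 * k) := by
        intro k hk
        simp only [Finset.mem_Icc] at hk
        have hk0 : (k:ℝ) ≠ 0 := Nat.cast_ne_zero.mpr (by omega)
        have hx : ((2*k:ℕ):ℝ) * c / 2 ^ (N+1) = (k:ℝ) * c / 2 ^ N := by
          push_cast [pow_succ]
          field_simp
        have hodd : (-1 : ℝ) ^ (2*k + 1) = -1 := Odd.neg_one_pow ⟨k, by ring⟩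
        rw [hh]
        simp only [hx, hodd]
        push_cast
        field_simp
        ring
      rw [Finset.sum_congr rfl step1,
        ← Finset.sum_image (g := fun k : ℕ => 2 * k) (f := h) (fun x _ y _ hxy => by simp only [] at hxy; omega)]
      refine Finset.sum_subset ?_ ?_
      · intro m hm
        simp only [Finset.mem_image, Finset.mem_Icc] at hm ⊢
        obtain ⟨k, hk, rfl⟩ := hm
        omega
      · intro m hm hm2
        simp only [Finset.mem_image, Finset.mem_Icc] at hm hm2
        push_neg at hm2
        have hodd : Odd m := by
          rcases Nat.even_or_odd m with he | ho
          · exfalso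
            obtain ⟨k, hk⟩ := he
            have h3 := hm2 k
            omega
          · exact ho
        have : (-1 : ℝ) ^ (m + 1) = 1 := Even.neg_one_pow (by obtain ⟨k, hk⟩ := hodd; exact ⟨k+1, by omega⟩)
        rw [hh]
        simp only [this]
        ring
    rw [key, Finset.sum_sub_distrib]
    ring

lemma riemann (c : ℝ) (hc : 0 < c) :
    Tendsto (fun N : ℕ => ∑ i ∈ Finset.range (2 ^ N), (c / 2 ^ N) * gg (((i:ℝ) + 1) * (c / 2 ^ N)))
      atTop (nhds (∫ t in (0:ℝ)..c, gg t)) := by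
  rw [Metric.tendsto_nhds]
  intro ε hε
  have hc1 : (0:ℝ) < c + 1 := by linarith
  set ε' : ℝ := ε / (c + 1) with hε'def
  have hε' : 0 < ε' := div_pos hε hc1
  have hu : UniformContinuousOn gg (Set.Icc 0 c) :=
    (isCompact_Icc).uniformContinuousOn_of_continuous gg_cont.continuousOn
  rw [Metric.uniformContinuousOn_iff] at hu
  obtain ⟨δ, hδ, hδ'⟩ := hu ε' hε'
  have hto : Tendsto (fun N : ℕ => c / 2 ^ N) atTop (nhds 0) := by
    simpa [div_eq_mul_inv] using tendsto_const_nhds.mul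
      (tendsto_pow_atTop_nhds_zero_of_lt_one (by norm_num) (by norm_num) :
        Tendsto (fun N : ℕ => (1/2 : ℝ) ^ N) atTop (nhds 0))
  filter_upwards [hto.eventually (gt_mem_nhds hδ), eventually_ge_atTop 0] with N hN _
  set θ : ℝ := c / 2 ^ N with hθdef
  have h2N : (0:ℝ) < 2 ^ N := by positivity
  have hθ : 0 < θ := div_pos hc h2N
  have hMθ : (2 ^ N : ℝ) * θ = c := by
    rw [hθdef]; field_simp
  have hI : (∫ t in (0:ℝ)..c, gg t)
      = ∑ i ∈ Finset.range (2 ^ N), ∫ t in ((i:ℝ) * θ)..(((i:ℝ) + 1) * θ), gg t := by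
    have := intervalIntegral.sum_integral_adjacent_intervals
      (a := fun i : ℕ => (i:ℝ) * θ) (f := gg) (μ := volume) (n := 2 ^ N)
      (fun k _ => gg_intble _ _)
    push_cast at this
    rw [this]
    norm_num [hMθ]
  have hterm : ∀ i ∈ Finset.range (2 ^ N),
      |θ * gg (((i:ℝ) + 1) * θ) - ∫ t in ((i:ℝ) * θ)..(((i:ℝ) + 1) * θ), gg t| ≤ ε' * θ := by
    intro i hi
    rw [Finset.mem_range] at hi
    have hconst : θ * gg (((i:ℝ) + 1) * θ)
        = ∫ _ in ((i:ℝ) * θ)..(((i:ℝ) + 1) * θ), gg (((i:ℝ) + 1) * θ) := by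
      rw [intervalIntegral.integral_const, smul_eq_mul]
      ring
    rw [hconst, ← intervalIntegral.integral_sub (intervalIntegrable_const) (gg_intble _ _)]
    have hbound : ∀ t ∈ Set.uIoc ((i:ℝ) * θ) (((i:ℝ) + 1) * θ),
        ‖gg (((i:ℝ) + 1) * θ) - gg t‖ ≤ ε' := by
      intro t ht
      rw [Set.uIoc_of_le (by nlinarith)] at ht
      obtain ⟨ht1, ht2⟩ := ht
      have hiN : (i:ℝ) + 1 ≤ (2:ℝ) ^ N := by
        have : (i:ℝ) + 1 ≤ ((2:ℕ):ℝ) ^ N := by exact_mod_cast Nat.succ_le_of_lt hi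
        simpa using this
      have hix : ((i:ℝ) + 1) * θ ≤ c := by
        calc ((i:ℝ) + 1) * θ ≤ (2:ℝ) ^ N * θ := by nlinarith
        _ = c := hMθ
      have hx : ((i:ℝ) + 1) * θ ∈ Set.Icc (0:ℝ) c := ⟨by positivity, hix⟩
      have hy : t ∈ Set.Icc (0:ℝ) c := ⟨le_trans (by positivity) ht1.le, le_trans ht2 hix⟩
      have hdist : dist (((i:ℝ) + 1) * θ) t < δ := by
        rw [Real.dist_eq, abs_of_nonneg (by nlinarith)]
        have : ((i:ℝ) + 1) * θ - t < θ := by nlinarith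
        linarith [hN]
      have := hδ' _ hx _ hy hdist
      rw [Real.dist_eq] at this
      exact this.le
    calc |∫ t in ((i:ℝ) * θ)..(((i:ℝ) + 1) * θ), (gg (((i:ℝ) + 1) * θ) - gg t)|
        ≤ ε' * |(((i:ℝ) + 1) * θ) - (i:ℝ) * θ| :=
          intervalIntegral.norm_integral_le_of_norm_le_const hbound
      _ = ε' * θ := by rw [show (((i:ℝ) + 1) * θ) - (i:ℝ) * θ = θ by ring, abs_of_pos hθ]
  have htotal : dist (∑ i ∈ Finset.range (2 ^ N), θ * gg (((i:ℝ) + 1) * θ))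
      (∫ t in (0:ℝ)..c, gg t) ≤ ε' * c := by
    rw [Real.dist_eq, hI, ← Finset.sum_sub_distrib]
    calc |∑ i ∈ Finset.range (2 ^ N),
          (θ * gg (((i:ℝ) + 1) * θ) - ∫ t in ((i:ℝ) * θ)..(((i:ℝ) + 1) * θ), gg t)|
        ≤ ∑ i ∈ Finset.range (2 ^ N),
          |θ * gg (((i:ℝ) + 1) * θ) - ∫ t in ((i:ℝ) * θ)..(((i:ℝ) + 1) * θ), gg t| :=
          Finset.abs_sum_le_sum_abs _ _
      _ ≤ ∑ _i ∈ Finset.range (2 ^ N), ε' * θ := Finset.sum_le_sum hterm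
      _ = (2 ^ N : ℝ) * (ε' * θ) := by
          rw [Finset.sum_const, Finset.card_range, nsmul_eq_mul]; push_cast; ring
      _ = ε' * c := by rw [← hMθ]; ring
  have hfin : ε' * c < ε := by
    rw [hε'def, div_mul_eq_mul_div, div_lt_iff₀ hc1]
    nlinarith
  exact lt_of_le_of_lt htotal hfin

lemma main_pos (c : ℝ) (hc : 0 < c) :
    Tendsto (fun N : ℕ => ∑ n ∈ Finset.Icc (1:ℕ) N, ∑ m ∈ Finset.Icc (1:ℕ) (2 ^ n - 1),
      (-1 : ℝ) ^ (m + 1) / (m:ℝ) * Real.sin ((m:ℝ) * c / 2 ^ n))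
      atTop (nhds (∫ t in (0:ℝ)..c, gg t)) := by
  have hto : Tendsto (fun N : ℕ => (c / 2 ^ N) * gg c) atTop (nhds 0) := by
    have h1 : Tendsto (fun N : ℕ => c / 2 ^ N) atTop (nhds 0) := by
      simpa [div_eq_mul_inv] using tendsto_const_nhds.mul
        (tendsto_pow_atTop_nhds_zero_of_lt_one (by norm_num) (by norm_num) :
          Tendsto (fun N : ℕ => (1/2 : ℝ) ^ N) atTop (nhds 0))
    simpa using h1.mul_const (gg c)
  have hsub := (riemann c hc).sub hto
  rw [sub_zero] at hsub
  refine hsub.congr (fun N => ?_)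
  rw [tele c N]
  set θ : ℝ := c / 2 ^ N with hθdef
  have h2N : (0:ℝ) < 2 ^ N := by positivity
  have hθ : 0 < θ := div_pos hc h2N
  have hMθ : (2 ^ N : ℝ) * θ = c := by rw [hθdef]; field_simp
  have step1 : ∀ i ∈ Finset.range (2 ^ N),
      θ * gg (((i:ℝ) + 1) * θ) = Real.sin (((i:ℝ) + 1) * θ) / ((i:ℝ) + 1) := by
    intro i _
    have hne : ((i:ℝ) + 1) * θ ≠ 0 := by positivity
    rw [show gg (((i:ℝ) + 1) * θ) = Real.sin (((i:ℝ) + 1) * θ) / (((i:ℝ) + 1) * θ)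
      from if_neg hne]
    have : (i:ℝ) + 1 ≠ 0 := by positivity
    field_simp
  rw [Finset.sum_congr rfl step1]
  have step2 : (∑ i ∈ Finset.range (2 ^ N), Real.sin (((i:ℝ) + 1) * θ) / ((i:ℝ) + 1))
      = ∑ m ∈ Finset.Icc (1:ℕ) (2 ^ N), Real.sin ((m:ℝ) * θ) / m := by
    rw [← Finset.Ico_add_one_right_eq_Icc, Finset.sum_Ico_eq_sum_range]
    refine Finset.sum_congr rfl (fun i _ => ?_)
    push_cast
    ring_nf
  rw [step2]
  have hM1 : 2 ^ N = (2 ^ N - 1) + 1 := by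
    have : 1 ≤ 2 ^ N := Nat.one_le_two_pow
    omega
  rw [hM1, Finset.sum_Icc_succ_top (by omega : (1:ℕ) ≤ (2 ^ N - 1) + 1), ← hM1]
  have hlast : Real.sin (((2 ^ N : ℕ):ℝ) * θ) / ((2 ^ N : ℕ):ℝ) = θ * gg c := by
    have hcast : ((2 ^ N : ℕ):ℝ) = (2:ℝ) ^ N := by push_cast; ring
    rw [hcast, hMθ, show gg c = Real.sin c / c from if_neg hc.ne']
    rw [hθdef]
    field_simp
  rw [hlast]
  simp only [hθdef, mul_div_assoc]
  ring

lemma gg_even (x : ℝ) : gg (-x) = gg x := by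
  by_cases hx : x = 0
  · simp [gg, hx]
  · rw [show gg (-x) = Real.sin (-x) / (-x) from if_neg (neg_ne_zero.mpr hx),
      show gg x = Real.sin x / x from if_neg hx, Real.sin_neg, neg_div_neg_eq]

lemma integral_eq (a b : ℝ) (ha : a ≠ 0) :
    (∫ x in (0:ℝ)..b, (if x = 0 then a else Real.sin (a * x) / x))
      = ∫ t in (0:ℝ)..(a * b), gg t := by
  have hcong : ∀ x : ℝ, (if x = 0 then a else Real.sin (a * x) / x) = a * gg (a * x) := by
    intro x
    by_cases hx : x = 0
    · simp [hx, gg]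
    · have hax : a * x ≠ 0 := mul_ne_zero ha hx
      rw [if_neg hx, show gg (a * x) = Real.sin (a * x) / (a * x) from if_neg hax]
      field_simp
  rw [intervalIntegral.integral_congr (fun x _ => hcong x),
    intervalIntegral.integral_const_mul,
    intervalIntegral.integral_comp_mul_left gg ha]
  rw [smul_eq_mul, mul_zero]
  field_simp

theorem stmt_7 (a b : ℝ) (hb : 0 < b) :
    ∃ S : ℝ,
      Filter.Tendsto
        (fun N : ℕ => ∑ n ∈ Finset.Icc (1:ℕ) N, ∑ m ∈ Finset.Icc (1:ℕ) (2 ^ n - 1),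
          (-1 : ℝ) ^ (m + 1) / (m:ℝ) * Real.sin ((m:ℝ) * b * a / 2 ^ n))
        Filter.atTop (nhds S) ∧
      (∫ x in (0:ℝ)..b, (if x = 0 then a else Real.sin (a * x) / x)) = S := by
  rcases lt_trichotomy a 0 with ha | ha | ha
  · -- a < 0
    refine ⟨-(∫ t in (0:ℝ)..(b * (-a)), gg t), ?_, ?_⟩
    · have h := (main_pos (b * (-a)) (mul_pos hb (by linarith))).neg
      refine h.congr (fun N => ?_)
      rw [← Finset.sum_neg_distrib]
      refine Finset.sum_congr rfl (fun n _ => ?_)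
      rw [← Finset.sum_neg_distrib]
      refine Finset.sum_congr rfl (fun m _ => ?_)
      rw [show ((m:ℝ) * (b * -a) / 2 ^ n) = -((m:ℝ) * b * a / 2 ^ n) by ring, Real.sin_neg]
      ring
    · rw [integral_eq a b (by linarith)]
      have h1 : (∫ x in (0:ℝ)..(b * (-a)), gg (-x)) = ∫ x in (-(b * (-a)))..(0:ℝ), gg x := by
        simpa using intervalIntegral.integral_comp_neg (a := (0:ℝ)) (b := b * (-a)) (f := gg)
      rw [show (∫ x in (0:ℝ)..(b * (-a)), gg (-x)) = ∫ x in (0:ℝ)..(b * (-a)), gg x from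
        intervalIntegral.integral_congr (fun x _ => gg_even x)] at h1
      rw [show a * b = -(b * (-a)) by ring, intervalIntegral.integral_symm, ← h1]
  · -- a = 0
    refine ⟨0, ?_, ?_⟩
    · subst ha
      simpa using (tendsto_const_nhds : Tendsto (fun _ : ℕ => (0:ℝ)) atTop (nhds 0))
    · subst ha
      simp
  · -- a > 0
    refine ⟨∫ t in (0:ℝ)..(a * b), gg t, ?_, ?_⟩
    · have h := main_pos (b * a) (mul_pos hb ha)
      rw [show b * a = a * b by ring] at h
      refine h.congr (fun N => ?_)
      refine Finset.sum_congr rfl (fun n _ => Finset.sum_congr rfl (fun m _ => ?_))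
      rw [show ((m:ℝ) * (a * b) / 2 ^ n) = (m:ℝ) * b * a / 2 ^ n by ring]
    · exact integral_eq a b ha.ne'
end

section
/- For every real number x, exp(x) = 1 + x · ∑_{n=1}^{∞} ∑_{m=1}^{2^n - 1} (-1)^{m+1} 2^{-n} exp(m·x/2^n), where for each n the inner sum is finite and the outer series over n converges. -/
lemma alt_sum8 (q : ℝ) (k : ℕ) :
    (1+q) * ∑ m ∈ Finset.Icc 1 k, (-1:ℝ)^(m+1) * q^m = q + (-1)^(k+1) * q^(k+1) := by
  induction k with
  | zero => simp
  | succ k ih =>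
    rw [Finset.sum_Icc_succ_top (by omega), mul_add, ih, pow_succ (-1:ℝ) (k+1), pow_succ q (k+1)]
    ring

lemma inner_sum8 (x : ℝ) (n : ℕ) (hn : 1 ≤ n) :
    ∑ m ∈ Finset.Icc (1:ℕ) (2^n - 1), (-1:ℝ)^(m+1) / 2^n * Real.exp ((m:ℝ) * x / 2^n)
      = (Real.exp (x/2^n) + Real.exp x) / ((1 + Real.exp (x/2^n)) * 2^n) := by
  set q := Real.exp (x/2^n) with hqdef
  have hq : 0 < q := Real.exp_pos _
  have h2 : (0:ℝ) < 2^n := by positivity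
  have hrw : ∀ m : ℕ, (-1:ℝ)^(m+1) / 2^n * Real.exp ((m:ℝ) * x / 2^n)
      = (1/2^n) * ((-1:ℝ)^(m+1) * q^m) := by
    intro m
    have h : q ^ m = Real.exp ((m:ℝ) * x / 2^n) := by
      rw [hqdef, ← Real.exp_nat_mul]
      congr 1
      ring
    rw [← h]; ring
  rw [Finset.sum_congr rfl (fun m _ => hrw m), ← Finset.mul_sum]
  have key := alt_sum8 q (2^n - 1)
  have h2n : 2^n - 1 + 1 = 2^n := Nat.succ_pred_eq_of_pos (Nat.pow_pos (n := n) (by norm_num))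
  rw [h2n] at key
  have heven : (-1:ℝ)^(2^n) = 1 := by
    refine Even.neg_one_pow ?_
    exact (Nat.even_pow).mpr ⟨even_two, by omega⟩
  have hqpow : q^(2^n) = Real.exp x := by
    rw [hqdef, ← Real.exp_nat_mul]
    congr 1
    field_simp
    push_cast
    ring
  rw [heven, hqpow, one_mul] at key
  have h1q : (1:ℝ) + q ≠ 0 := by positivity
  have hS : ∑ m ∈ Finset.Icc (1:ℕ) (2^n - 1), (-1:ℝ)^(m+1) * q^m = (q + Real.exp x)/(1+q) := by
    rw [eq_div_iff h1q]; linarith [key]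
  rw [hS, ← div_div]
  ring

lemma telescope8 (x : ℝ) (hx : x ≠ 0) (N : ℕ) :
    ∑ n ∈ Finset.Icc (1:ℕ) N, ∑ m ∈ Finset.Icc (1:ℕ) (2^n - 1),
        (-1:ℝ)^(m+1) / 2^n * Real.exp ((m:ℝ) * x / 2^n)
      = (Real.exp x - 1) * (((2:ℝ)^N)⁻¹ / (Real.exp (x/2^N) - 1)) - ((2:ℝ)^N)⁻¹ := by
  have hne : ∀ k : ℕ, Real.exp (x/2^k) - 1 ≠ 0 := by
    intro k
    rw [sub_ne_zero]
    intro h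
    have h0 : x / 2^k = 0 := (Real.exp_eq_one_iff _).mp h
    exact hx (by simpa [div_eq_zero_iff] using h0)
  induction N with
  | zero =>
    simp only [Finset.Icc_self, pow_zero, div_one, inv_one]
    rw [show Finset.Icc (1:ℕ) 0 = ∅ from rfl, Finset.sum_empty]
    have h0 : Real.exp x - 1 ≠ 0 := by simpa using hne 0
    field_simp
    ring
  | succ N ih =>
    rw [Finset.sum_Icc_succ_top (by omega), ih, inner_sum8 x (N+1) (by omega)]
    have hq2 : Real.exp (x/2^N) = Real.exp (x/2^(N+1)) ^ 2 := by
      rw [sq, ← Real.exp_add]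
      congr 1
      field_simp
      ring
    set q := Real.exp (x/2^(N+1)) with hqdef
    have hqpos : 0 < q := Real.exp_pos _
    have h1 : q - 1 ≠ 0 := hne (N+1)
    have h2 : (1:ℝ) + q ≠ 0 := by positivity
    have h3 : q^2 - 1 ≠ 0 := by
      have : q^2 - 1 = (q-1)*(q+1) := by ring
      rw [this]
      exact mul_ne_zero h1 (by positivity)
    rw [hq2]
    have h2N : ((2:ℝ)^N) ≠ 0 := by positivity
    have h2N1 : ((2:ℝ)^(N+1)) ≠ 0 := by positivity
    field_simp
    ring

lemma slope_lim8 : Filter.Tendsto (fun t : ℝ => t / (Real.exp t - 1)) (nhdsWithin 0 {(0:ℝ)}ᶜ) (nhds 1) := by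
  have h := Real.hasDerivAt_exp 0
  rw [hasDerivAt_iff_tendsto_slope] at h
  rw [Real.exp_zero] at h
  have h2 := h.inv₀ one_ne_zero
  rw [inv_one] at h2
  refine h2.congr fun t => ?_
  simp [slope_def_field, Real.exp_zero, inv_div]

lemma pow2_inv_lim8 : Filter.Tendsto (fun N : ℕ => ((2:ℝ)^N)⁻¹) Filter.atTop (nhds 0) := by
  have : (fun N : ℕ => ((2:ℝ)^N)⁻¹) = fun N : ℕ => ((2:ℝ)⁻¹)^N := by
    funext N; rw [inv_pow]
  rw [this]
  exact tendsto_pow_atTop_nhds_zero_of_lt_one (by norm_num) (by norm_num)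

theorem stmt_8 (x : ℝ) :
    ∃ S : ℝ,
      Filter.Tendsto
        (fun N : ℕ => ∑ n ∈ Finset.Icc (1:ℕ) N, ∑ m ∈ Finset.Icc (1:ℕ) (2 ^ n - 1),
          (-1 : ℝ) ^ (m + 1) / 2 ^ n * Real.exp ((m:ℝ) * x / 2 ^ n))
        Filter.atTop (nhds S) ∧
      Real.exp x = 1 + x * S := by
  by_cases hx : x = 0
  · subst hx
    refine ⟨1, ?_, by simp⟩
    have hP : ∀ N : ℕ, ∑ n ∈ Finset.Icc (1:ℕ) N, ∑ m ∈ Finset.Icc (1:ℕ) (2 ^ n - 1),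
        (-1 : ℝ) ^ (m + 1) / 2 ^ n * Real.exp ((m:ℝ) * 0 / 2 ^ n) = 1 - ((2:ℝ)^N)⁻¹ := by
      intro N
      induction N with
      | zero => simp [show Finset.Icc (1:ℕ) 0 = ∅ from rfl]
      | succ N ih =>
        rw [Finset.sum_Icc_succ_top (by omega), ih, inner_sum8 0 (N+1) (by omega)]
        norm_num
        have h1 : ((2:ℝ)^N) ≠ 0 := by positivity
        have h2 : ((2:ℝ)^(N+1)) ≠ 0 := by positivity
        field_simp
        ring
    have := (tendsto_const_nhds (x := (1:ℝ)) (f := Filter.atTop (α := ℕ))).sub pow2_inv_lim8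
    rw [sub_zero] at this
    exact this.congr fun N => (hP N).symm
  · refine ⟨(Real.exp x - 1)/x, ?_, by field_simp; ring⟩
    have hne : ∀ k : ℕ, Real.exp (x/2^k) - 1 ≠ 0 := by
      intro k
      rw [sub_ne_zero]
      intro h
      have h0 : x / 2^k = 0 := (Real.exp_eq_one_iff _).mp h
      exact hx (by simpa [div_eq_zero_iff] using h0)
    have hu : Filter.Tendsto (fun N : ℕ => x/2^N) Filter.atTop (nhdsWithin 0 {(0:ℝ)}ᶜ) := by
      rw [tendsto_nhdsWithin_iff]
      constructor
      · have := pow2_inv_lim8.const_mul x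
        rw [mul_zero] at this
        exact this.congr fun N => by rw [div_eq_mul_inv]
      · exact Filter.Eventually.of_forall fun N => by
          simp only [Set.mem_compl_iff, Set.mem_singleton_iff]
          exact div_ne_zero hx (by positivity)
    have hcomp := slope_lim8.comp hu
    -- (2^N)⁻¹ / (exp(x/2^N) - 1) = (1/x) * ((x/2^N)/(exp(x/2^N)-1))
    have hkey : Filter.Tendsto (fun N : ℕ =>
        (Real.exp x - 1) * (((2:ℝ)^N)⁻¹ / (Real.exp (x/2^N) - 1)) - ((2:ℝ)^N)⁻¹)
        Filter.atTop (nhds ((Real.exp x - 1)/x)) := by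
      have hm := (hcomp.const_mul ((Real.exp x - 1) * x⁻¹)).sub pow2_inv_lim8
      have hval : (Real.exp x - 1) * x⁻¹ * 1 - 0 = (Real.exp x - 1)/x := by
        rw [mul_one, sub_zero, div_eq_mul_inv]
      rw [hval] at hm
      refine hm.congr fun N => ?_
      have hD := hne N
      have h2N : ((2:ℝ)^N) ≠ 0 := by positivity
      simp only [Function.comp]
      field_simp
    refine hkey.congr fun N => ?_
    exact (telescope8 x hx N).symm
end

section
/- For all real numbers a and b with b > 0, ∫_0^b exp(-a·x²) dx = b · ∑_{n=1}^{∞} ∑_{m=1}^{2^n - 1} (-1)^{m+1} 2^{-n} exp(-a·(m·b)²/4^n), where for each n the inner sum is finite and the outer series over n converges. -/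
open Finset Filter MeasureTheory Set

namespace Stmt9Aux

noncomputable def f (a x : ℝ) : ℝ := Real.exp (-a * x ^ 2)

noncomputable def A (a b : ℝ) (n : ℕ) : ℝ :=
  ∑ m ∈ Finset.Icc (1:ℕ) (2 ^ n - 1), (1 / 2 ^ n : ℝ) * f a ((m : ℝ) * b / 2 ^ n)

lemma A_zero (a b : ℝ) : A a b 0 = 0 := by simp [A]

lemma term_eq (a b : ℝ) (k : ℕ) :
    ∑ m ∈ Finset.Icc (1:ℕ) (2 ^ (k+1) - 1),
      (-1 : ℝ) ^ (m + 1) / 2 ^ (k+1) * Real.exp (-a * ((m:ℝ) * b) ^ 2 / 4 ^ (k+1))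
    = A a b (k+1) - A a b k := by
  have h4 : ∀ n : ℕ, ((4:ℝ) ^ n) = ((2:ℝ) ^ n) ^ 2 := by
    intro n
    rw [show (4:ℝ) = 2^2 by norm_num, ← pow_mul, ← pow_mul, Nat.mul_comm]
  have hexp : ∀ n : ℕ, ∀ m : ℕ,
      Real.exp (-a * ((m:ℝ) * b) ^ 2 / 4 ^ n) = f a ((m:ℝ) * b / 2 ^ n) := by
    intro n m
    have h2 : ((2:ℝ) ^ n) ≠ 0 := by positivity
    rw [f, div_pow, h4 n]
    ring_nf
  -- rewrite each term
  have hterm : ∀ m : ℕ,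
      (-1 : ℝ) ^ (m + 1) / 2 ^ (k+1) * Real.exp (-a * ((m:ℝ) * b) ^ 2 / 4 ^ (k+1))
      = (1 / 2 ^ (k+1) : ℝ) * f a ((m:ℝ) * b / 2 ^ (k+1))
        - (if Even m then (2 / 2 ^ (k+1) : ℝ) * f a ((m:ℝ) * b / 2 ^ (k+1)) else 0) := by
    intro m
    rw [hexp]
    rcases Nat.even_or_odd m with he | ho
    · have hpow : ((-1:ℝ)) ^ (m+1) = -1 := by rw [pow_succ, he.neg_one_pow]; ring
      rw [if_pos he, hpow]; ring
    · have hpow : ((-1:ℝ)) ^ (m+1) = 1 := by rw [pow_succ, ho.neg_one_pow]; ring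
      rw [if_neg (Nat.not_even_iff_odd.mpr ho), hpow]; ring
  rw [Finset.sum_congr rfl fun m _ => hterm m, Finset.sum_sub_distrib]
  have hA : ∑ m ∈ Finset.Icc (1:ℕ) (2 ^ (k+1) - 1),
      (1 / 2 ^ (k+1) : ℝ) * f a ((m:ℝ) * b / 2 ^ (k+1)) = A a b (k+1) := rfl
  rw [hA, ← Finset.sum_filter]
  congr 1
  -- the even part equals A a b k
  have himg : (Finset.Icc (1:ℕ) (2 ^ (k+1) - 1)).filter (fun m => Even m)
      = (Finset.Icc (1:ℕ) (2 ^ k - 1)).image (fun j => 2 * j) := by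
    have hp : 2 ^ (k+1) = 2 * 2 ^ k := by rw [pow_succ]; ring
    have h1 : 1 ≤ 2 ^ k := Nat.one_le_two_pow
    ext m
    simp only [Finset.mem_filter, Finset.mem_Icc, Finset.mem_image]
    constructor
    · rintro ⟨⟨hm1, hm2⟩, r, rfl⟩
      exact ⟨r, ⟨by omega, by omega⟩, by omega⟩
    · rintro ⟨j, ⟨hj1, hj2⟩, rfl⟩
      exact ⟨⟨by omega, by omega⟩, ⟨j, by omega⟩⟩
  rw [himg, Finset.sum_image (fun x _ y _ h => by omega)]
  unfold A
  refine Finset.sum_congr rfl fun j _ => ?_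
  have h2 : ((2:ℝ) ^ k) ≠ 0 := by positivity
  have harg : ((2 * j : ℕ) : ℝ) * b / 2 ^ (k+1) = (j:ℝ) * b / 2 ^ k := by
    push_cast
    rw [pow_succ]
    field_simp
  rw [harg]
  rw [pow_succ]
  field_simp

lemma partial_eq_A (a b : ℝ) (N : ℕ) :
    ∑ n ∈ Finset.Icc (1:ℕ) N, ∑ m ∈ Finset.Icc (1:ℕ) (2 ^ n - 1),
      (-1 : ℝ) ^ (m + 1) / 2 ^ n * Real.exp (-a * ((m:ℝ) * b) ^ 2 / 4 ^ n)
    = A a b N := by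
  have : Finset.Icc (1:ℕ) N = Finset.Ico 1 (N+1) := by rw [Finset.Ico_add_one_right_eq_Icc]
  rw [this, Finset.sum_Ico_eq_sum_range]
  simp only [Nat.add_sub_cancel]
  have : ∀ i ∈ Finset.range N, (∑ m ∈ Finset.Icc (1:ℕ) (2 ^ (1+i) - 1),
      (-1 : ℝ) ^ (m + 1) / 2 ^ (1+i) * Real.exp (-a * ((m:ℝ) * b) ^ 2 / 4 ^ (1+i)))
      = A a b (i+1) - A a b i := by
    intro i _
    rw [add_comm 1 i]
    exact term_eq a b i
  rw [Finset.sum_congr rfl this, Finset.sum_range_sub (A a b), A_zero, sub_zero]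

noncomputable def g (a b : ℝ) (N : ℕ) (x : ℝ) : ℝ :=
  f a (b * (((⌈(2:ℝ) ^ N * x / b⌉ : ℤ) : ℝ) - 1) / 2 ^ N)

lemma g_meas (a b : ℝ) (N : ℕ) : Measurable (g a b N) := by
  unfold g f
  have h1 : Measurable fun x : ℝ => (⌈(2:ℝ) ^ N * x / b⌉ : ℤ) :=
    Measurable.ceil ((measurable_id.const_mul _).div_const b)
  have h2 : Measurable fun x : ℝ => ((⌈(2:ℝ) ^ N * x / b⌉ : ℤ) : ℝ) := by measurability
  exact Real.measurable_exp.comp (by measurability)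

lemma ceil_on_Ioc {b : ℝ} (hb : 0 < b) (N m : ℕ) {x : ℝ}
    (hx : x ∈ Set.Ioc ((m:ℝ) * b / 2 ^ N) (((m:ℝ) + 1) * b / 2 ^ N)) :
    ⌈(2:ℝ) ^ N * x / b⌉ = (m : ℤ) + 1 := by
  have h2N : (0:ℝ) < 2 ^ N := by positivity
  rw [Int.ceil_eq_iff]
  push_cast
  constructor
  · have h1 : (m:ℝ) * b < 2 ^ N * x := by
      have := hx.1; rw [div_lt_iff₀ h2N] at this; linarith
    rw [show (m:ℝ) + 1 - 1 = (m:ℝ) by ring, lt_div_iff₀ hb]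
    linarith
  · have h2 : 2 ^ N * x ≤ ((m:ℝ) + 1) * b := by
      have := hx.2; rw [le_div_iff₀ h2N] at this; linarith
    rw [div_le_iff₀ hb]
    linarith

lemma integral_g {a b : ℝ} (hb : 0 < b) (N : ℕ) :
    ∫ x in Set.Ioc (0:ℝ) b, g a b N x
      = ∑ m ∈ Finset.range (2 ^ N), (b / 2 ^ N) * f a ((m:ℝ) * b / 2 ^ N) := by
  have h2N : (0:ℝ) < 2 ^ N := by positivity
  set pts : ℕ → ℝ := fun i => (i:ℝ) * b / 2 ^ N with hpts
  have hle : ∀ i : ℕ, pts i ≤ pts (i+1) := by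
    intro i
    simp only [hpts]
    gcongr
    · push_cast; linarith
  have hconst : ∀ m : ℕ, Set.EqOn (g a b N) (fun _ => f a ((m:ℝ) * b / 2 ^ N))
      (Set.Ioc (pts m) (pts (m+1))) := by
    intro m x hx
    have hx' : x ∈ Set.Ioc ((m:ℝ) * b / 2 ^ N) (((m:ℝ) + 1) * b / 2 ^ N) := by
      simpa [hpts, Nat.cast_add, Nat.cast_one] using hx
    simp only [g, ceil_on_Ioc hb N m hx']
    push_cast
    ring_nf
  have hII : ∀ m : ℕ, IntervalIntegrable (g a b N) volume (pts m) (pts (m+1)) := by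
    intro m
    rw [intervalIntegrable_iff, Set.uIoc_of_le (hle m)]
    refine (MeasureTheory.integrableOn_const measure_Ioc_lt_top.ne :
      MeasureTheory.IntegrableOn (fun _ => f a ((m:ℝ) * b / 2 ^ N)) _ _).congr ?_
    exact (MeasureTheory.ae_restrict_iff' measurableSet_Ioc).2
      (Filter.Eventually.of_forall fun x hx => ((hconst m) hx).symm)
  have hpiece : ∀ m : ℕ, (∫ x in pts m..pts (m+1), g a b N x)
      = (b / 2 ^ N) * f a ((m:ℝ) * b / 2 ^ N) := by
    intro m
    rw [intervalIntegral.integral_of_le (hle m),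
      MeasureTheory.setIntegral_congr_fun measurableSet_Ioc (hconst m),
      MeasureTheory.setIntegral_const, measureReal_def, Real.volume_Ioc, smul_eq_mul]
    have hdiff : pts (m+1) - pts m = b / 2 ^ N := by
      simp only [hpts]; push_cast; field_simp; ring
    rw [ENNReal.toReal_ofReal (by rw [hdiff]; positivity), hdiff]
  have hsum := intervalIntegral.sum_integral_adjacent_intervals
    (μ := volume) (a := pts) (n := 2 ^ N) (fun k _ => hII k)
  have h0 : pts 0 = 0 := by simp [hpts]
  have hb' : pts (2 ^ N) = b := by
    simp only [hpts]; push_cast; field_simp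
  rw [Finset.sum_congr rfl fun m _ => hpiece m] at hsum
  rw [← hsum.symm] at *
  rw [← hsum, h0, hb', intervalIntegral.integral_of_le hb.le]

lemma tendsto_integral_g {a b : ℝ} (hb : 0 < b) :
    Filter.Tendsto (fun N : ℕ => ∫ x in Set.Ioc (0:ℝ) b, g a b N x)
      Filter.atTop (nhds (∫ x in Set.Ioc (0:ℝ) b, f a x)) := by
  have hhalf : Filter.Tendsto (fun N : ℕ => b / 2 ^ N) Filter.atTop (nhds 0) := by
    have h := tendsto_pow_atTop_nhds_zero_of_lt_one (by norm_num : (0:ℝ) ≤ 1/2)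
      (by norm_num : (1/2:ℝ) < 1)
    have := h.const_mul b
    simpa [div_eq_mul_inv, inv_pow] using this
  refine MeasureTheory.tendsto_integral_of_dominated_convergence
    (fun _ => Real.exp (|a| * b ^ 2))
    (fun N => ((g_meas a b N).aestronglyMeasurable).restrict) ?_ ?_ ?_
  · exact MeasureTheory.integrableOn_const measure_Ioc_lt_top.ne
  · intro N
    refine (MeasureTheory.ae_restrict_iff' measurableSet_Ioc).2
      (Filter.Eventually.of_forall fun x hx => ?_)
    have h2N : (0:ℝ) < 2 ^ N := by positivity
    set r : ℝ := b * (((⌈(2:ℝ) ^ N * x / b⌉ : ℤ) : ℝ) - 1) / 2 ^ N with hr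
    have hc1 : (1:ℝ) ≤ ((⌈(2:ℝ) ^ N * x / b⌉ : ℤ) : ℝ) := by
      exact_mod_cast Int.ceil_pos.2 (div_pos (mul_pos (by positivity) hx.1) hb)
    have hr0 : 0 ≤ r :=
      div_nonneg (mul_nonneg hb.le (by linarith)) h2N.le
    have hcx : ((⌈(2:ℝ) ^ N * x / b⌉ : ℤ) : ℝ) - 1 < (2:ℝ) ^ N * x / b := by
      have := Int.ceil_lt_add_one ((2:ℝ) ^ N * x / b)
      linarith
    have hrx : r ≤ x := by
      rw [hr, div_le_iff₀ h2N]
      calc b * (((⌈(2:ℝ) ^ N * x / b⌉ : ℤ) : ℝ) - 1) ≤ b * ((2:ℝ) ^ N * x / b) :=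
            by gcongr
        _ = x * 2 ^ N := by field_simp
    have hrb : r ≤ b := le_trans hrx hx.2
    have hnorm : ‖g a b N x‖ = Real.exp (-a * r ^ 2) := by
      rw [g, f, Real.norm_eq_abs, abs_of_pos (Real.exp_pos _)]
    rw [hnorm]
    apply Real.exp_le_exp.2
    have hr2 : r ^ 2 ≤ b ^ 2 := by nlinarith
    calc -a * r ^ 2 ≤ |a| * r ^ 2 := by
          have := neg_abs_le a
          nlinarith [sq_nonneg r]
      _ ≤ |a| * b ^ 2 := by gcongr <;> positivity
  · refine (MeasureTheory.ae_restrict_iff' measurableSet_Ioc).2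
      (Filter.Eventually.of_forall fun x hx => ?_)
    have hrtendsto : Filter.Tendsto
        (fun N : ℕ => b * (((⌈(2:ℝ) ^ N * x / b⌉ : ℤ) : ℝ) - 1) / 2 ^ N)
        Filter.atTop (nhds x) := by
      have hlow : ∀ N : ℕ, x - b / 2 ^ N ≤
          b * (((⌈(2:ℝ) ^ N * x / b⌉ : ℤ) : ℝ) - 1) / 2 ^ N := by
        intro N
        have h2N : (0:ℝ) < 2 ^ N := by positivity
        rw [le_div_iff₀ h2N]
        have hcy : (2:ℝ) ^ N * x / b ≤ ((⌈(2:ℝ) ^ N * x / b⌉ : ℤ) : ℝ) :=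
          Int.le_ceil _
        have : (2:ℝ) ^ N * x / b - 1 ≤ ((⌈(2:ℝ) ^ N * x / b⌉ : ℤ) : ℝ) - 1 := by linarith
        calc (x - b / 2 ^ N) * 2 ^ N = b * ((2:ℝ) ^ N * x / b - 1) := by
              field_simp
          _ ≤ b * (((⌈(2:ℝ) ^ N * x / b⌉ : ℤ) : ℝ) - 1) := by gcongr
      have hhigh : ∀ N : ℕ, b * (((⌈(2:ℝ) ^ N * x / b⌉ : ℤ) : ℝ) - 1) / 2 ^ N ≤ x := by
        intro N
        have h2N : (0:ℝ) < 2 ^ N := by positivity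
        rw [div_le_iff₀ h2N]
        have hcx : ((⌈(2:ℝ) ^ N * x / b⌉ : ℤ) : ℝ) - 1 ≤ (2:ℝ) ^ N * x / b := by
          have := Int.ceil_lt_add_one ((2:ℝ) ^ N * x / b)
          linarith
        calc b * (((⌈(2:ℝ) ^ N * x / b⌉ : ℤ) : ℝ) - 1) ≤ b * ((2:ℝ) ^ N * x / b) :=
              by gcongr
          _ = x * 2 ^ N := by field_simp
      have hlowlim : Filter.Tendsto (fun N : ℕ => x - b / 2 ^ N) Filter.atTop (nhds x) := by
        have := tendsto_const_nhds (x := x) (f := Filter.atTop (α := ℕ)) |>.sub hhalf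
        simpa using this
      exact tendsto_of_tendsto_of_tendsto_of_le_of_le hlowlim tendsto_const_nhds hlow hhigh
    have hcont : Continuous (f a) := by
      unfold f
      exact Real.continuous_exp.comp (by continuity)
    exact ((hcont.tendsto x).comp hrtendsto : _)

end Stmt9Aux

theorem stmt_9 (a b : ℝ) (hb : 0 < b) :
    ∃ S : ℝ,
      Filter.Tendsto
        (fun N : ℕ => ∑ n ∈ Finset.Icc (1:ℕ) N, ∑ m ∈ Finset.Icc (1:ℕ) (2 ^ n - 1),
          (-1 : ℝ) ^ (m + 1) / 2 ^ n * Real.exp (-a * ((m:ℝ) * b) ^ 2 / 4 ^ n))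
        Filter.atTop (nhds S) ∧
      (∫ x in (0:ℝ)..b, Real.exp (-a * x ^ 2)) = b * S := by
  have hb0 : b ≠ 0 := ne_of_gt hb
  set I : ℝ := ∫ x in Set.Ioc (0:ℝ) b, Stmt9Aux.f a x with hI
  have hhalf : Filter.Tendsto (fun N : ℕ => b / 2 ^ N) Filter.atTop (nhds 0) := by
    have h := tendsto_pow_atTop_nhds_zero_of_lt_one (by norm_num : (0:ℝ) ≤ 1/2)
      (by norm_num : (1/2:ℝ) < 1)
    have := h.const_mul b
    simpa [div_eq_mul_inv, inv_pow] using this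
  have hbA : ∀ N : ℕ, b * Stmt9Aux.A a b N
      = (∫ x in Set.Ioc (0:ℝ) b, Stmt9Aux.g a b N x) - (b / 2 ^ N) * Stmt9Aux.f a 0 := by
    intro N
    have h1 : (0:ℕ) < 2 ^ N := Nat.two_pow_pos N
    rw [Stmt9Aux.integral_g hb N, Finset.range_eq_Ico,
      Finset.sum_eq_sum_Ico_succ_bot h1]
    simp only [Nat.cast_zero, zero_mul, zero_div, zero_add]
    rw [add_sub_cancel_left]
    have hIco : Finset.Ico (1:ℕ) (2 ^ N) = Finset.Icc (1:ℕ) (2 ^ N - 1) := by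
      rw [← Finset.Ico_add_one_right_eq_Icc]
      congr 1
      omega
    rw [hIco]
    unfold Stmt9Aux.A
    rw [Finset.mul_sum]
    exact Finset.sum_congr rfl fun m _ => by ring
  have hzero : Filter.Tendsto (fun N : ℕ => (b / 2 ^ N) * Stmt9Aux.f a 0)
      Filter.atTop (nhds 0) := by
    simpa using hhalf.mul_const (Stmt9Aux.f a 0)
  have hAtend : Filter.Tendsto (fun N : ℕ => Stmt9Aux.A a b N)
      Filter.atTop (nhds (I / b)) := by
    have h3 := ((Stmt9Aux.tendsto_integral_g (a := a) hb).sub hzero).div_const b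
    rw [sub_zero] at h3
    refine Filter.Tendsto.congr (fun N => ?_) h3
    rw [← hbA N]
    field_simp
  refine ⟨I / b, ?_, ?_⟩
  · exact Filter.Tendsto.congr (fun N => (Stmt9Aux.partial_eq_A a b N).symm) hAtend
  · rw [intervalIntegral.integral_of_le hb.le]
    have : (∫ x in Set.Ioc (0:ℝ) b, Real.exp (-a * x ^ 2)) = I := rfl
    rw [this]
    field_simp
end

section
/- For every real number p ≥ 0, Γ(p + 1) = ∫_0^1 (log(1/x))^p dx = ∑_{n=1}^{∞} ∑_{m=1}^{2^n - 1} (-1)^{m+1} 2^{-n} (log(2^n/m))^p, where (·)^p denotes the real power (each base log(2^n/m) is nonnegative since 1 ≤ m ≤ 2^n - 1), for each n the inner sum is finite, and the outer series over n converges. -/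
open MeasureTheory Set Real Finset

noncomputable def Ff (p : ℝ) (x : ℝ) : ℝ := Real.log (1/x) ^ p

lemma img_exp : (fun t : ℝ => Real.exp (-t)) '' (Set.Ioi 0) = Set.Ioo 0 1 := by
  ext x
  constructor
  · rintro ⟨t, ht, rfl⟩
    exact ⟨Real.exp_pos _, by rw [Real.exp_lt_one_iff]; simpa using ht⟩
  · rintro ⟨hx0, hx1⟩
    exact ⟨-Real.log x, by simpa using Real.log_neg hx0 hx1, by
      simp [Real.exp_log hx0]⟩

lemma halp (p : ℝ) :
    (fun t : ℝ => |(-Real.exp (-t))| • Ff p (Real.exp (-t))) =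
      fun t : ℝ => Real.exp (-t) * t ^ p := by
  funext t
  have : (1 : ℝ) / Real.exp (-t) = Real.exp t := by
    rw [Real.exp_neg, one_div, inv_inv]
  simp [Ff, this, Real.log_exp, abs_of_pos (Real.exp_pos _), smul_eq_mul]

lemma hderiv : ∀ t ∈ Set.Ioi (0:ℝ), HasDerivWithinAt (fun t : ℝ => Real.exp (-t))
    (-Real.exp (-t)) (Set.Ioi 0) t := by
  intro t _
  have h : HasDerivAt (fun t : ℝ => Real.exp (-t)) (Real.exp (-t) * (-1)) t :=
    (Real.hasDerivAt_exp (-t)).comp t ((hasDerivAt_id t).neg)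
  simpa using h.hasDerivWithinAt

lemma hinj : Set.InjOn (fun t : ℝ => Real.exp (-t)) (Set.Ioi 0) := by
  intro a _ b _ h
  have := Real.exp_injective h
  linarith

lemma key_int (p : ℝ) (hp : 0 ≤ p) :
    IntegrableOn (Ff p) (Set.Ioo 0 1) ∧
      ∫ x in Set.Ioo (0:ℝ) 1, Ff p x = Real.Gamma (p+1) := by
  have h1 : (0:ℝ) < p + 1 := by linarith
  have hG : IntegrableOn (fun t : ℝ => Real.exp (-t) * t ^ p) (Set.Ioi 0) := by
    have := Real.GammaIntegral_convergent h1
    simpa using this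
  constructor
  · rw [← img_exp,
      integrableOn_image_iff_integrableOn_abs_deriv_smul measurableSet_Ioi hderiv hinj,
      halp p]
    exact hG
  · rw [← img_exp,
      integral_image_eq_integral_abs_deriv_smul measurableSet_Ioi hderiv hinj,
      show (fun t : ℝ => |(-Real.exp (-t))| • Ff p (Real.exp (-t))) = _ from halp p,
      Real.Gamma_eq_integral h1]
    simp
lemma Ff_anti (p : ℝ) (hp : 0 ≤ p) {x y : ℝ} (hx : 0 < x) (hxy : x ≤ y) (hy : y ≤ 1) :
    Ff p y ≤ Ff p x := by
  have hy0 : 0 < y := lt_of_lt_of_le hx hxy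
  have h1 : (0:ℝ) ≤ Real.log (1/y) :=
    Real.log_nonneg (one_le_one_div hy0 hy)
  have h2 : Real.log (1/y) ≤ Real.log (1/x) :=
    Real.log_le_log (by positivity) (one_div_le_one_div_of_le hx hxy)
  exact Real.rpow_le_rpow h1 h2 hp

lemma Ff_nonneg (p : ℝ) {x : ℝ} (hx : 0 < x) (hx1 : x ≤ 1) : 0 ≤ Ff p x :=
  Real.rpow_nonneg (Real.log_nonneg (one_le_one_div hx hx1)) p

lemma Ff_antitoneOn (p : ℝ) (hp : 0 ≤ p) {a b : ℝ} (ha : 0 < a) (hb : b ≤ 1) :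
    AntitoneOn (Ff p) (Set.Icc a b) := by
  intro x hx y hy hxy
  exact Ff_anti p hp (lt_of_lt_of_le ha hx.1) hxy (le_trans hy.2 hb)

lemma lower_bound (p : ℝ) (hp : 0 ≤ p) (N : ℕ) :
    ∫ x in Set.Ioc (((2:ℝ)^N)⁻¹) 1, Ff p x ≤
      ∑ m ∈ Finset.Icc (1:ℕ) (2^N - 1), Ff p ((m:ℝ) * ((2:ℝ)^N)⁻¹) * ((2:ℝ)^N)⁻¹ := by
  set h : ℝ := ((2:ℝ)^N)⁻¹ with hdef
  have h2pos : (0:ℝ) < (2:ℝ)^N := by positivity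
  have hh : 0 < h := by positivity
  set M : ℕ := 2^N - 1 with hMdef
  have hM1 : (M:ℝ) + 1 = (2:ℝ)^N := by
    have hn : M + 1 = 2^N := by
      have : 1 ≤ 2^N := Nat.one_le_two_pow
      omega
    calc (M:ℝ) + 1 = ((M+1 : ℕ) : ℝ) := by push_cast; ring
    _ = (2:ℝ)^N := by rw [hn]; push_cast; ring
  set a : ℕ → ℝ := fun k => ((k:ℝ) + 1) * h with hadef
  have ha : ∀ k : ℕ, a k = ((k:ℝ) + 1) * h := fun k => rfl
  have ha_le : ∀ k, k ≤ M → a k ≤ 1 := by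
    intro k hk
    have h1 : (k:ℝ) + 1 ≤ (M:ℝ) + 1 := by
      have : (k:ℝ) ≤ (M:ℝ) := by exact_mod_cast hk
      linarith
    calc a k ≤ ((M:ℝ)+1) * h := mul_le_mul_of_nonneg_right h1 hh.le
    _ = 1 := by rw [hM1, hdef]; field_simp
  have ha_pos : ∀ k : ℕ, 0 < a k := by
    intro k
    have : (0:ℝ) < (k:ℝ) + 1 := by positivity
    exact mul_pos this hh
  have ha_mono : ∀ k : ℕ, a k ≤ a (k+1) := by
    intro k
    rw [ha, ha]
    apply mul_le_mul_of_nonneg_right _ hh.le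
    push_cast; linarith
  have hint : ∀ k, k < M → IntervalIntegrable (Ff p) MeasureTheory.volume (a k) (a (k+1)) := by
    intro k hk
    apply AntitoneOn.intervalIntegrable
    rw [Set.uIcc_of_le (ha_mono k)]
    exact Ff_antitoneOn p hp (ha_pos k) (ha_le (k+1) hk)
  have hsum : ∑ k ∈ Finset.range M, ∫ x in (a k)..(a (k+1)), Ff p x
      = ∫ x in (a 0)..(a M), Ff p x :=
    intervalIntegral.sum_integral_adjacent_intervals hint
  have ha0 : a 0 = h := by rw [ha]; norm_num
  have haM : a M = 1 := by rw [ha, hM1, hdef]; field_simp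
  have hIoc : ∫ x in Set.Ioc h 1, Ff p x = ∫ x in (a 0)..(a M), Ff p x := by
    rw [ha0, haM, intervalIntegral.integral_of_le]
    calc h = a 0 := ha0.symm
    _ ≤ 1 := ha_le 0 (by positivity)
  rw [hIoc, ← hsum]
  have hterm : ∀ k ∈ Finset.range M, (∫ x in (a k)..(a (k+1)), Ff p x) ≤ Ff p (a k) * h := by
    intro k hk
    rw [Finset.mem_range] at hk
    calc (∫ x in (a k)..(a (k+1)), Ff p x) ≤ ∫ x in (a k)..(a (k+1)), Ff p (a k) := by
          apply intervalIntegral.integral_mono_on (ha_mono k) (hint k hk)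
            intervalIntegrable_const
          intro x hx
          exact Ff_anti p hp (ha_pos k) hx.1 (le_trans hx.2 (ha_le (k+1) hk))
    _ = (a (k+1) - a k) * Ff p (a k) := by
          rw [intervalIntegral.integral_const]; simp [smul_eq_mul]
    _ = Ff p (a k) * h := by rw [ha, ha]; push_cast; ring
  calc ∑ k ∈ Finset.range M, ∫ x in (a k)..(a (k+1)), Ff p x
      ≤ ∑ k ∈ Finset.range M, Ff p (a k) * h := Finset.sum_le_sum hterm
  _ = ∑ m ∈ Finset.Icc (1:ℕ) M, Ff p ((m:ℝ) * h) * h := by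
      rw [← Finset.Ico_add_one_right_eq_Icc, Finset.sum_Ico_eq_sum_range]
      apply Finset.sum_congr (by norm_num)
      intro k _
      rw [ha]
      push_cast
      ring_nf

lemma upper_bound (p : ℝ) (hp : 0 ≤ p) (N : ℕ)
    (hInt : MeasureTheory.IntegrableOn (Ff p) (Set.Ioc 0 1)) :
    ∑ m ∈ Finset.Icc (1:ℕ) (2^N - 1), Ff p ((m:ℝ) * ((2:ℝ)^N)⁻¹) * ((2:ℝ)^N)⁻¹ ≤
      ∫ x in Set.Ioc (0:ℝ) 1, Ff p x := by
  set h : ℝ := ((2:ℝ)^N)⁻¹ with hdef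
  have h2pos : (0:ℝ) < (2:ℝ)^N := by positivity
  have hh : 0 < h := by positivity
  set M : ℕ := 2^N - 1 with hMdef
  have hM1 : (M:ℝ) + 1 = (2:ℝ)^N := by
    have hn : M + 1 = 2^N := by
      have : 1 ≤ 2^N := Nat.one_le_two_pow
      omega
    calc (M:ℝ) + 1 = ((M+1 : ℕ) : ℝ) := by push_cast; ring
    _ = (2:ℝ)^N := by rw [hn]; push_cast; ring
  set b : ℕ → ℝ := fun k => (k:ℝ) * h with hbdef
  have hb : ∀ k : ℕ, b k = (k:ℝ) * h := fun k => rfl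
  have hb_le : ∀ k, k ≤ M + 1 → b k ≤ 1 := by
    intro k hk
    have h1 : (k:ℝ) ≤ (M:ℝ) + 1 := by
      have : (k:ℝ) ≤ ((M:ℕ):ℝ) + 1 := by exact_mod_cast hk
      linarith
    calc b k ≤ ((M:ℝ)+1) * h := mul_le_mul_of_nonneg_right h1 hh.le
    _ = 1 := by rw [hM1, hdef]; field_simp
  have hb_nonneg : ∀ k : ℕ, 0 ≤ b k := fun k => by positivity
  have hb_mono : ∀ k : ℕ, b k ≤ b (k+1) := by
    intro k
    rw [hb, hb]
    apply mul_le_mul_of_nonneg_right _ hh.le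
    push_cast; linarith
  have hIntSub : ∀ k : ℕ, k ≤ M → MeasureTheory.IntegrableOn (Ff p)
      (Set.Ioc (b k) (b (k+1))) := by
    intro k hk
    apply hInt.mono_set
    apply Set.Ioc_subset_Ioc (hb_nonneg k) (hb_le (k+1) (by omega))
  have hterm : ∀ k ∈ Finset.range M, Ff p (b (k+1)) * h ≤
      ∫ x in Set.Ioc (b k) (b (k+1)), Ff p x := by
    intro k hk
    rw [Finset.mem_range] at hk
    have hvol : (MeasureTheory.volume (Set.Ioc (b k) (b (k+1)))).toReal = h := by
      rw [Real.volume_Ioc, ENNReal.toReal_ofReal (by linarith [hb_mono k])]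
      rw [hb, hb]; push_cast; ring
    calc Ff p (b (k+1)) * h = ∫ _x in Set.Ioc (b k) (b (k+1)), Ff p (b (k+1)) := by
          rw [MeasureTheory.setIntegral_const, MeasureTheory.measureReal_def, hvol, smul_eq_mul, mul_comm]
    _ ≤ ∫ x in Set.Ioc (b k) (b (k+1)), Ff p x := by
          apply MeasureTheory.setIntegral_mono_on
            (MeasureTheory.integrableOn_const (by
              rw [Real.volume_Ioc]; exact ENNReal.ofReal_ne_top))
            (hIntSub k (by omega)) measurableSet_Ioc
          intro x hx
          exact Ff_anti p hp (lt_of_le_of_lt (hb_nonneg k) hx.1) hx.2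
            (hb_le (k+1) (by omega))
  have hsum : ∑ k ∈ Finset.range M, ∫ x in Set.Ioc (b k) (b (k+1)), Ff p x
      = ∫ x in Set.Ioc (b 0) (b M), Ff p x := by
    have heach : ∀ k, k < M → (∫ x in Set.Ioc (b k) (b (k+1)), Ff p x)
        = ∫ x in (b k)..(b (k+1)), Ff p x := by
      intro k _
      rw [intervalIntegral.integral_of_le (hb_mono k)]
    rw [Finset.sum_congr rfl (fun k hk => heach k (Finset.mem_range.mp hk)),
      intervalIntegral.sum_integral_adjacent_intervals (fun k hk =>
        (intervalIntegrable_iff_integrableOn_Ioc_of_le (hb_mono k)).2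
          (hIntSub k hk.le)),
      intervalIntegral.integral_of_le]
    calc b 0 = 0 := by rw [hb]; norm_num
    _ ≤ b M := hb_nonneg M
  have hfinal : ∫ x in Set.Ioc (b 0) (b M), Ff p x ≤ ∫ x in Set.Ioc (0:ℝ) 1, Ff p x := by
    have hb0 : b 0 = 0 := by rw [hb]; norm_num
    rw [hb0]
    apply MeasureTheory.setIntegral_mono_set hInt
    · filter_upwards [MeasureTheory.ae_restrict_mem measurableSet_Ioc] with x hx
      exact Ff_nonneg p hx.1 hx.2
    · exact (Set.Ioc_subset_Ioc_right (hb_le M (by omega))).eventuallyLE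
  calc ∑ m ∈ Finset.Icc (1:ℕ) M, Ff p ((m:ℝ) * h) * h
      = ∑ k ∈ Finset.range M, Ff p (b (k+1)) * h := by
        rw [← Finset.Ico_add_one_right_eq_Icc, Finset.sum_Ico_eq_sum_range]
        apply Finset.sum_congr (by norm_num)
        intro k _
        rw [hb]
        push_cast
        ring_nf
  _ ≤ ∑ k ∈ Finset.range M, ∫ x in Set.Ioc (b k) (b (k+1)), Ff p x :=
        Finset.sum_le_sum hterm
  _ = ∫ x in Set.Ioc (b 0) (b M), Ff p x := hsum
  _ ≤ ∫ x in Set.Ioc (0:ℝ) 1, Ff p x := hfinal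

noncomputable def Tt (p : ℝ) (n : ℕ) : ℝ :=
  ∑ m ∈ Finset.Icc (1:ℕ) (2^n - 1), Real.log ((2:ℝ)^n / (m:ℝ)) ^ p / 2^n

lemma even_filter (P : ℕ) (hP : 1 ≤ P) :
    (Finset.Icc (1:ℕ) (2*P - 1)).filter (fun m => Even m) =
      Finset.image (fun k => 2*k) (Finset.Icc (1:ℕ) (P - 1)) := by
  ext m
  simp only [Finset.mem_filter, Finset.mem_image, Finset.mem_Icc, Nat.even_iff]
  constructor
  · rintro ⟨⟨h1, h2⟩, h3⟩
    exact ⟨m/2, by omega, by omega⟩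
  · rintro ⟨k, ⟨hk1, hk2⟩, rfl⟩
    omega

lemma telescope (p : ℝ) (n : ℕ) :
    ∑ m ∈ Finset.Icc (1:ℕ) (2^(n+1) - 1),
      (-1:ℝ)^(m+1) / 2^(n+1) * Real.log ((2:ℝ)^(n+1) / (m:ℝ)) ^ p
    = Tt p (n+1) - Tt p n := by
  set c : ℕ → ℝ := fun m => Real.log ((2:ℝ)^(n+1) / (m:ℝ)) ^ p / 2^(n+1) with hcdef
  have hc : ∀ m : ℕ, c m = Real.log ((2:ℝ)^(n+1) / (m:ℝ)) ^ p / 2^(n+1) := fun _ => rfl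
  have h1 : ∀ m : ℕ, (-1:ℝ)^(m+1) / 2^(n+1) * Real.log ((2:ℝ)^(n+1) / (m:ℝ)) ^ p
      = c m - (if Even m then 2 * c m else 0) := by
    intro m
    rcases Nat.even_or_odd m with he | ho
    · rw [if_pos he, hc]
      rw [(he.add_one).neg_one_pow]
      ring
    · rw [if_neg (by simpa using ho), hc]
      rw [(ho.add_one).neg_one_pow]
      ring
  rw [Finset.sum_congr rfl (fun m _ => h1 m), Finset.sum_sub_distrib,
    ← Finset.sum_filter]
  have h2 : (Finset.Icc (1:ℕ) (2^(n+1) - 1)).filter (fun m => Even m) =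
      Finset.image (fun k => 2*k) (Finset.Icc (1:ℕ) (2^n - 1)) := by
    have := even_filter (2^n) Nat.one_le_two_pow
    rwa [← pow_succ'] at this
  rw [h2, Finset.sum_image (fun a _ b _ h => by omega)]
  have h3 : ∀ k ∈ Finset.Icc (1:ℕ) (2^n - 1),
      2 * c (2*k) = Real.log ((2:ℝ)^n / (k:ℝ)) ^ p / 2^n := by
    intro k hk
    rw [Finset.mem_Icc] at hk
    have hk0 : (k:ℝ) ≠ 0 := Nat.cast_ne_zero.2 (by omega)
    rw [hc]
    have hcast : ((2*k : ℕ) : ℝ) = 2 * (k:ℝ) := by push_cast; ring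
    rw [hcast]
    have hpow : (2:ℝ)^(n+1) = 2 * 2^n := by rw [pow_succ]; ring
    rw [hpow, mul_div_mul_left _ _ (two_ne_zero)]
    ring
  rw [Finset.sum_congr rfl h3]
  rfl

lemma partial_sum (p : ℝ) (N : ℕ) :
    ∑ n ∈ Finset.Icc (1:ℕ) N, ∑ m ∈ Finset.Icc (1:ℕ) (2^n - 1),
      (-1:ℝ)^(m+1) / 2^n * Real.log ((2:ℝ)^n / (m:ℝ)) ^ p = Tt p N := by
  induction N with
  | zero => simp [Tt]
  | succ N ih =>
      rw [Finset.sum_Icc_succ_top (Nat.le_add_left 1 N), ih, telescope p N]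
      ring

lemma Tt_eq (p : ℝ) (N : ℕ) :
    Tt p N = ∑ m ∈ Finset.Icc (1:ℕ) (2^N - 1), Ff p ((m:ℝ) * ((2:ℝ)^N)⁻¹) * ((2:ℝ)^N)⁻¹ := by
  apply Finset.sum_congr rfl
  intro m hm
  rw [Finset.mem_Icc] at hm
  have hm0 : (m:ℝ) ≠ 0 := Nat.cast_ne_zero.2 (by omega)
  have h2 : ((2:ℝ)^N) ≠ 0 := by positivity
  unfold Ff
  rw [div_eq_mul_inv]
  congr 2
  rw [one_div, mul_inv, inv_inv, div_eq_mul_inv, mul_comm]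

theorem stmt_11 (p : ℝ) (hp : 0 ≤ p) :
    ∃ S : ℝ,
      Filter.Tendsto
        (fun N : ℕ => ∑ n ∈ Finset.Icc (1:ℕ) N, ∑ m ∈ Finset.Icc (1:ℕ) (2 ^ n - 1),
          (-1 : ℝ) ^ (m + 1) / 2 ^ n * Real.log ((2 : ℝ) ^ n / (m:ℝ)) ^ p)
        Filter.atTop (nhds S) ∧
      Real.Gamma (p + 1) = ∫ x in (0:ℝ)..1, Real.log (1 / x) ^ p ∧
      Real.Gamma (p + 1) = S := by
  obtain ⟨hIntIoo, hIval⟩ := key_int p hp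
  have hIntIoc : MeasureTheory.IntegrableOn (Ff p) (Set.Ioc 0 1) :=
    (integrableOn_Ioc_iff_integrableOn_Ioo (by exact enorm_ne_top)).2 hIntIoo
  have hIocval : ∫ x in Set.Ioc (0:ℝ) 1, Ff p x = Real.Gamma (p+1) := by
    rw [MeasureTheory.integral_Ioc_eq_integral_Ioo]; exact hIval
  -- union of the lower sets
  have hUnion : (⋃ N : ℕ, Set.Ioc (((2:ℝ)^N)⁻¹) 1) = Set.Ioc (0:ℝ) 1 := by
    ext x
    simp only [Set.mem_iUnion, Set.mem_Ioc]
    constructor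
    · rintro ⟨N, hN, hx1⟩
      exact ⟨lt_trans (by positivity) hN, hx1⟩
    · rintro ⟨hx0, hx1⟩
      obtain ⟨N, hN⟩ := exists_pow_lt_of_lt_one hx0 (by norm_num : (1:ℝ)/2 < 1)
      refine ⟨N, ?_, hx1⟩
      calc ((2:ℝ)^N)⁻¹ = ((1:ℝ)/2)^N := by rw [one_div, inv_pow]
      _ < x := hN
  have hmono : Monotone (fun N : ℕ => Set.Ioc (((2:ℝ)^N)⁻¹) 1) := by
    intro N M hNM
    apply Set.Ioc_subset_Ioc_left
    apply inv_anti₀ (by positivity)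
    exact pow_le_pow_right₀ (by norm_num) hNM
  have hL : Filter.Tendsto (fun N : ℕ => ∫ x in Set.Ioc (((2:ℝ)^N)⁻¹) 1, Ff p x)
      Filter.atTop (nhds (∫ x in Set.Ioc (0:ℝ) 1, Ff p x)) := by
    have := MeasureTheory.tendsto_setIntegral_of_monotone
      (fun N : ℕ => measurableSet_Ioc) hmono (hUnion ▸ hIntIoc)
    rwa [hUnion] at this
  have hT : Filter.Tendsto (Tt p) Filter.atTop (nhds (∫ x in Set.Ioc (0:ℝ) 1, Ff p x)) := by
    apply tendsto_of_tendsto_of_tendsto_of_le_of_le hL tendsto_const_nhds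
    · intro N
      rw [Tt_eq]
      exact lower_bound p hp N
    · intro N
      rw [Tt_eq]
      exact upper_bound p hp N hIntIoc
  refine ⟨Real.Gamma (p+1), ?_, ?_, rfl⟩
  · have heq : (fun N : ℕ => ∑ n ∈ Finset.Icc (1:ℕ) N, ∑ m ∈ Finset.Icc (1:ℕ) (2 ^ n - 1),
        (-1 : ℝ) ^ (m + 1) / 2 ^ n * Real.log ((2 : ℝ) ^ n / (m:ℝ)) ^ p) = Tt p :=
      funext (partial_sum p)
    rw [heq, ← hIocval]
    exact hT
  · rw [intervalIntegral.integral_of_le zero_le_one, ← hIocval]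
    rfl
end
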